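/- arXiv:2401.00628 — 2 statements merged into one kernel-verified Lean document; each statement's English description precedes it below -/
import Mathlib

section
/- Let d ≥ 1 and let ρ, σ ∈ S_d, and let α = (α_1, …, α_k) be the cycle type of ρ⁻¹σ (parts including fixed points, k = ℓ(ρ⁻¹σ)). Then the number of weakly monotone geodesics from ρ to σ in the Hurwitz–Cayley graph, i.e., the number of weakly monotone factorizations of ρ⁻¹σ into the minimal number d − k of transpositions, equals the product over i = 1,…,k of the Catalan numbers Cat_{α_i − 1}, where Cat_n = (1/(n+1))·binomial(2n, n). -/
noncomputable section

/-- The transposition associated with a pair of points. -/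
def toSwap {d : ℕ} (p : Fin d × Fin d) : Equiv.Perm (Fin d) :=
  Equiv.swap p.1 p.2

/-- `Wle d r ρ σ` is the number of weakly monotone (weakly increasing) `r`-step walks `ρ → σ` in
the Hurwitz–Cayley graph: sequences of transpositions `((i_1 j_1), …, (i_r j_r))` with `i_k < j_k`,
`j_1 ≤ j_2 ≤ ⋯ ≤ j_r` and `ρ·(i_1 j_1)⋯(i_r j_r) = σ`. -/
def Wle (d r : ℕ) (ρ σ : Equiv.Perm (Fin d)) : ℕ :=
  Nat.card {l : List (Fin d × Fin d) //
    l.length = r ∧ (∀ p ∈ l, p.1 < p.2) ∧ (l.map Prod.snd).Pairwise (· ≤ ·) ∧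
      ρ * (l.map toSwap).prod = σ}

/-- The number of cycles of a permutation of `{1,…,d}`, counting fixed points as 1-cycles. -/
def ell {d : ℕ} (π : Equiv.Perm (Fin d)) : ℕ :=
  π.cycleType.card + (d - π.support.card)

/-- The cycle type of a permutation of `{1,…,d}` including parts equal to `1` for fixed points. -/
def fullCycleType {d : ℕ} (π : Equiv.Perm (Fin d)) : Multiset ℕ :=
  π.cycleType + Multiset.replicate (d - π.support.card) 1

open Equiv Equiv.Perm Finset

namespace WleAux

variable {d : ℕ}


lemma catalan_pos (n : ℕ) : 0 < catalan n := by
  have h := succ_mul_catalan_eq_centralBinom n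
  have h2 := n.centralBinom_pos
  rcases Nat.eq_zero_or_pos (catalan n) with h0 | h0
  · rw [h0, mul_zero] at h; omega
  · exact h0

lemma card_support_le (π : Equiv.Perm (Fin d)) : π.support.card ≤ d := by
  simpa using Finset.card_le_card (Finset.subset_univ π.support)

lemma ell_eq_card (π : Equiv.Perm (Fin d)) : ell π = Multiset.card (fullCycleType π) := by
  simp [ell, fullCycleType]

lemma fullCycleType_sum (π : Equiv.Perm (Fin d)) : (fullCycleType π).sum = d := by
  have := card_support_le π
  simp [fullCycleType, Multiset.sum_replicate, Equiv.Perm.sum_cycleType]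
  omega

lemma one_le_of_mem_fullCycleType {π : Equiv.Perm (Fin d)} {n : ℕ}
    (h : n ∈ fullCycleType π) : 1 ≤ n := by
  rcases Multiset.mem_add.1 h with h | h
  · exact le_trans (by norm_num) (Equiv.Perm.two_le_of_mem_cycleType h)
  · simp [Multiset.eq_of_mem_replicate h]

lemma card_le_sum {m : Multiset ℕ} (h : ∀ x ∈ m, 1 ≤ x) : Multiset.card m ≤ m.sum := by
  induction m using Multiset.induction_on with
  | empty => simp
  | cons a s ih =>
    simp only [Multiset.card_cons, Multiset.sum_cons]
    have := h a (Multiset.mem_cons_self a s)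
    have := ih (fun x hx => h x (Multiset.mem_cons_of_mem hx))
    omega

lemma ell_le (π : Equiv.Perm (Fin d)) : ell π ≤ d := by
  calc ell π = Multiset.card (fullCycleType π) := ell_eq_card π
    _ ≤ (fullCycleType π).sum := card_le_sum (fun x hx => one_le_of_mem_fullCycleType hx)
    _ = d := fullCycleType_sum π

lemma ell_one : ell (1 : Equiv.Perm (Fin d)) = d := by
  simp [ell]

lemma fullCycleType_one : fullCycleType (1 : Equiv.Perm (Fin d)) = Multiset.replicate d 1 := by
  simp [fullCycleType]

lemma ell_lt_of_ne_one {π : Equiv.Perm (Fin d)} (h : π ≠ 1) : ell π < d := by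
  obtain ⟨n, hn⟩ := Multiset.exists_mem_of_ne_zero (fun h0 => h (cycleType_eq_zero.1 h0))
  have h2 : 2 ≤ n := Equiv.Perm.two_le_of_mem_cycleType hn
  have hmem : n ∈ fullCycleType π := Multiset.mem_add.2 (Or.inl hn)
  obtain ⟨m, hm⟩ := Multiset.exists_cons_of_mem hmem
  have hsum := fullCycleType_sum π
  have hcard := ell_eq_card π
  rw [hm] at hsum hcard
  simp only [Multiset.sum_cons, Multiset.card_cons] at hsum hcard
  have : Multiset.card m ≤ m.sum := card_le_sum (fun x hx => by
    have : x ∈ fullCycleType π := by rw [hm]; exact Multiset.mem_cons_of_mem hx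
    exact one_le_of_mem_fullCycleType this)
  omega

lemma fullCycleType_isCycle {c : Equiv.Perm (Fin d)} (h : c.IsCycle) :
    fullCycleType c = c.support.card ::ₘ Multiset.replicate (d - c.support.card) 1 := by
  rw [fullCycleType, h.cycleType]
  rfl

lemma fullCycleType_mul_disjoint {f g : Equiv.Perm (Fin d)} (h : f.Disjoint g) :
    fullCycleType (f * g) + Multiset.replicate d 1 = fullCycleType f + fullCycleType g := by
  have hcard : (f * g).support.card = f.support.card + g.support.card := by
    rw [h.support_mul]
    exact Finset.card_union_of_disjoint (Equiv.Perm.disjoint_iff_disjoint_support.1 h)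
  have hle : f.support.card + g.support.card ≤ d := by
    rw [← hcard]; exact card_support_le _
  rw [fullCycleType, fullCycleType, fullCycleType, h.cycleType_mul, hcard]
  have : ∀ m n : ℕ, Multiset.replicate (m + n) (1:ℕ) = Multiset.replicate m 1 + Multiset.replicate n 1 :=
    fun m n => Multiset.replicate_add m n 1
  have e : d - (f.support.card + g.support.card) + d
      = (d - f.support.card) + (d - g.support.card) := by
    have := card_support_le f; have := card_support_le g; omega
  calc f.cycleType + g.cycleType + Multiset.replicate (d - (f.support.card + g.support.card)) 1
        + Multiset.replicate d 1
      = f.cycleType + g.cycleType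
          + Multiset.replicate (d - (f.support.card + g.support.card) + d) 1 := by
        rw [this]; abel
    _ = f.cycleType + Multiset.replicate (d - f.support.card) 1
          + (g.cycleType + Multiset.replicate (d - g.support.card) 1) := by
        rw [e, this]; abel

lemma fullCycleType_inv (π : Equiv.Perm (Fin d)) : fullCycleType π⁻¹ = fullCycleType π := by
  simp [fullCycleType, Equiv.Perm.cycleType_inv, Equiv.Perm.support_inv]

lemma ell_inv (π : Equiv.Perm (Fin d)) : ell π⁻¹ = ell π := by
  simp [ell, Equiv.Perm.cycleType_inv, Equiv.Perm.support_inv]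

set_option maxHeartbeats 1000000 in
/-- THE split lemma. -/
lemma split_lemma {π : Equiv.Perm (Fin d)} {a b : Fin d} (hab : a ≠ b) {k : ℕ}
    (hk0 : 0 < k) (hksc : k < (π.cycleOf a).support.card) (hkb : (π ^ k) a = b) :
    fullCycleType (Equiv.swap a b * π) + {(π.cycleOf a).support.card}
      = fullCycleType π + {k, (π.cycleOf a).support.card - k} := by
  classical
  have ha : π a ≠ a := by
    intro h
    have h1 : π.cycleOf a = 1 := (cycleOf_eq_one_iff π).2 h
    rw [h1] at hksc
    simp at hksc
  set c := π.cycleOf a with hc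
  set sc := c.support.card with hsc
  have hamem : a ∈ c.support := mem_support_cycleOf_iff.2 ⟨SameCycle.refl _ _, mem_support.2 ha⟩
  have hcyc : π.IsCycleOn c.support := isCycleOn_support_cycleOf π a
  have hmem_pow : ∀ i : ℕ, (π ^ i) a ∈ c.support := fun i =>
    mem_support_cycleOf_iff.2 ⟨⟨(i : ℤ), by rw [zpow_natCast]⟩, mem_support.2 ha⟩
  have hinj : ∀ {i j : ℕ}, i < sc → j < sc → (π ^ i) a = (π ^ j) a → i = j := by
    intro i j hi hj hij
    have h1 : i ≡ j [MOD sc] := (hcyc.pow_apply_eq_pow_apply hamem).1 hij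
    have h2 : i % sc = j % sc := h1
    rwa [Nat.mod_eq_of_lt hi, Nat.mod_eq_of_lt hj] at h2
  have hsc_pow : (π ^ sc) a = a := hcyc.pow_card_apply hamem
  have hscd : sc ≤ d := card_support_le c
  have hsc2 : 2 ≤ sc := by omega
  have capp : ∀ x ∈ c.support, c x = π x := fun x hx =>
    (mem_support_cycleOf_iff.1 hx).1.cycleOf_apply
  set c' := Equiv.swap a b * c with hc'
  have hb_ne_a : ∀ {i : ℕ}, 0 < i → i < sc → (π ^ i) a ≠ a := by
    intro i h0 hi h
    have := hinj hi (by omega : 0 < sc) (by simpa using h)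
    omega
  have hstep : ∀ i : ℕ, i < sc → c' ((π ^ i) a) = Equiv.swap a b ((π ^ (i+1)) a) := by
    intro i hi
    have h1 : c ((π ^ i) a) = π ((π ^ i) a) := capp _ (hmem_pow i)
    have h2 : (π ^ (i+1)) a = π ((π ^ i) a) := by rw [pow_succ', Equiv.Perm.mul_apply]
    rw [hc', Equiv.Perm.mul_apply, h1, h2]
  -- orbit of a under c'
  have orba : ∀ j : ℕ, (c' ^ j) a = (π ^ (j % k)) a := by
    intro j
    induction j with
    | zero => simp
    | succ j ih =>
      rw [pow_succ', Equiv.Perm.mul_apply, ih]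
      set i := j % k with hi
      have hik : i < k := Nat.mod_lt _ hk0
      have hmod : (i + 1) % k = (j + 1) % k := (Nat.mod_modEq j k).add_right 1
      rw [hstep i (by omega)]
      by_cases hik1 : i + 1 = k
      · rw [hik1, hkb, Equiv.swap_apply_right, ← hmod, hik1, Nat.mod_self, pow_zero,
          Equiv.Perm.one_apply]
      · have hlt : i + 1 < k := by omega
        rw [Equiv.swap_apply_of_ne_of_ne (hb_ne_a (by omega) (by omega))
          (fun h => hik1 (hinj (by omega) hksc (h.trans hkb.symm)))]
        rw [← hmod, Nat.mod_eq_of_lt hlt]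
  have orbb : ∀ j : ℕ, (c' ^ j) b = (π ^ (k + j % (sc - k))) a := by
    intro j
    induction j with
    | zero => simp [hkb]
    | succ j ih =>
      rw [pow_succ', Equiv.Perm.mul_apply, ih]
      set u := sc - k with hu
      have hu0 : 0 < u := by omega
      set i := j % u with hi
      have hik : i < u := Nat.mod_lt _ hu0
      have hmod : (i + 1) % u = (j + 1) % u := (Nat.mod_modEq j u).add_right 1
      rw [hstep (k + i) (by omega)]
      by_cases hik1 : i + 1 = u
      · have : k + i + 1 = sc := by omega
        rw [this, hsc_pow, Equiv.swap_apply_left, ← hmod, hik1, Nat.mod_self, Nat.add_zero, hkb]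
      · have hlt : k + (i + 1) < sc := by omega
        have hne_a : (π ^ (k + i + 1)) a ≠ a := hb_ne_a (by omega) (by omega)
        have hne_b : (π ^ (k + i + 1)) a ≠ b := fun h => by
          have := hinj (by omega : k + i + 1 < sc) hksc (h.trans hkb.symm)
          omega
        have hlt2 : i + 1 < u := by omega
        have he : k + (i + 1) % u = k + i + 1 := by rw [Nat.mod_eq_of_lt hlt2]; omega
        rw [Equiv.swap_apply_of_ne_of_ne hne_a hne_b, ← hmod, he]
  -- orbit sets
  set Oa := (Finset.range k).image (fun i => (π ^ i) a) with hOa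
  set Ob := (Finset.Ico k sc).image (fun i => (π ^ i) a) with hOb
  have hbmem : b ∈ c.support := hkb ▸ hmem_pow k
  have hSCA : ∀ y, c'.SameCycle a y ↔ y ∈ Oa := by
    intro y
    constructor
    · intro h
      obtain ⟨i, _, _, hiy⟩ := h.exists_pow_eq c'
      rw [orba i] at hiy
      exact hiy ▸ Finset.mem_image.2 ⟨i % k, Finset.mem_range.2 (Nat.mod_lt _ hk0), rfl⟩
    · intro hy
      obtain ⟨i, hi, rfl⟩ := Finset.mem_image.1 hy
      have hik := Finset.mem_range.1 hi
      exact ⟨(i : ℤ), by rw [zpow_natCast, orba i, Nat.mod_eq_of_lt hik]⟩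
  have hSCB : ∀ y, c'.SameCycle b y ↔ y ∈ Ob := by
    intro y
    constructor
    · intro h
      obtain ⟨i, _, _, hiy⟩ := h.exists_pow_eq c'
      rw [orbb i] at hiy
      have hlt : k + i % (sc - k) < sc := by
        have := Nat.mod_lt i (show 0 < sc - k by omega)
        omega
      exact hiy ▸ Finset.mem_image.2 ⟨k + i % (sc - k),
        Finset.mem_Ico.2 ⟨by omega, hlt⟩, rfl⟩
    · intro hy
      obtain ⟨i, hi, rfl⟩ := Finset.mem_image.1 hy
      obtain ⟨hi1, hi2⟩ := Finset.mem_Ico.1 hi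
      refine ⟨((i - k : ℕ) : ℤ), ?_⟩
      rw [zpow_natCast, orbb (i - k), Nat.mod_eq_of_lt (by omega)]
      have he : k + (i - k) = i := by omega
      rw [he]
  have hnotSC : ¬ c'.SameCycle a b := by
    intro h
    obtain ⟨i, hi, hib⟩ := Finset.mem_image.1 ((hSCA b).1 h)
    have hik := Finset.mem_range.1 hi
    have := hinj (by omega) hksc (hib.trans hkb.symm)
    omega
  have hUnion : Oa ∪ Ob = c.support := by
    apply Finset.Subset.antisymm
    · intro y hy
      rcases Finset.mem_union.1 hy with h | h
      · obtain ⟨i, _, rfl⟩ := Finset.mem_image.1 h; exact hmem_pow i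
      · obtain ⟨i, _, rfl⟩ := Finset.mem_image.1 h; exact hmem_pow i
    · intro y hy
      obtain ⟨hsame, _⟩ := mem_support_cycleOf_iff.1 hy
      obtain ⟨i, hi, rfl⟩ := hsame.exists_pow_eq_of_mem_support (mem_support.2 ha)
      by_cases hik : i < k
      · exact Finset.mem_union_left _ (Finset.mem_image.2 ⟨i, Finset.mem_range.2 hik, rfl⟩)
      · exact Finset.mem_union_right _
          (Finset.mem_image.2 ⟨i, Finset.mem_Ico.2 ⟨by omega, hi⟩, rfl⟩)
  have hfixround : ∀ x, ¬ c'.SameCycle a x → ¬ c'.SameCycle b x → c' x = x := by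
    intro x h1 h2
    by_contra hne
    have hx : x ∈ c.support := by
      have hx' := Equiv.Perm.support_mul_le (Equiv.swap a b) c (mem_support.2 hne)
      simp only [Finset.sup_eq_union, Finset.mem_union] at hx'
      rcases hx' with h | h
      · rw [Equiv.Perm.support_swap hab] at h
        rcases Finset.mem_insert.1 h with rfl | h
        · exact hamem
        · rw [Finset.mem_singleton.1 h]; exact hbmem
      · exact h
    rw [← hUnion] at hx
    rcases Finset.mem_union.1 hx with h | h
    · exact h1 ((hSCA x).2 h)
    · exact h2 ((hSCB x).2 h)
  have hOacard : Oa.card = k := by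
    rw [hOa, Finset.card_image_of_injOn, Finset.card_range]
    intro i hi j hj hij
    simp only [Finset.coe_range, Set.mem_Iio] at hi hj
    exact hinj (by omega) (by omega) hij
  have hObcard : Ob.card = sc - k := by
    rw [hOb, Finset.card_image_of_injOn, Nat.card_Ico]
    intro i hi j hj hij
    simp only [Finset.coe_Ico, Set.mem_Ico] at hi hj
    exact hinj (by omega) (by omega) hij
  have hpieceA : fullCycleType (c'.cycleOf a) = k ::ₘ Multiset.replicate (d - k) 1 := by
    rcases Nat.lt_or_ge 1 k with hk1 | hk1
    · -- 1 < k : a moved by c'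
      have hca : c' a ≠ a := by
        have h1 := orba 1
        rw [pow_one, Nat.mod_eq_of_lt hk1] at h1
        rw [h1, pow_one]; exact ha
      have hiscyc : (c'.cycleOf a).IsCycle := isCycle_cycleOf c' hca
      have hsupp : (c'.cycleOf a).support = Oa := by
        ext y
        rw [mem_support_cycleOf_iff]
        exact ⟨fun h => (hSCA y).1 h.1, fun h => ⟨(hSCA y).2 h, mem_support.2 hca⟩⟩
      rw [fullCycleType_isCycle hiscyc, hsupp, hOacard]
    · -- k = 1 : a fixed by c'
      have hk1' : k = 1 := by omega
      have hfix : c' a = a := by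
        have h1 := orba 1
        rw [pow_one, hk1', Nat.mod_self, pow_zero] at h1
        simpa using h1
      rw [(cycleOf_eq_one_iff c').2 hfix, fullCycleType_one, hk1']
      have hd : d - 1 + 1 = d := by omega
      conv_lhs => rw [← hd]
      rw [Multiset.replicate_succ]
  have hpieceB : fullCycleType (c'.cycleOf b)
      = (sc - k) ::ₘ Multiset.replicate (d - (sc - k)) 1 := by
    rcases Nat.lt_or_ge 1 (sc - k) with hk1 | hk1
    · have hcb : c' b ≠ b := by
        have h1 := orbb 1
        rw [pow_one, Nat.mod_eq_of_lt hk1] at h1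
        rw [h1]
        intro h
        have := hinj (by omega : k + 1 < sc) hksc (h.trans hkb.symm)
        omega
      have hiscyc : (c'.cycleOf b).IsCycle := isCycle_cycleOf c' hcb
      have hsupp : (c'.cycleOf b).support = Ob := by
        ext y
        rw [mem_support_cycleOf_iff]
        exact ⟨fun h => (hSCB y).1 h.1, fun h => ⟨(hSCB y).2 h, mem_support.2 hcb⟩⟩
      rw [fullCycleType_isCycle hiscyc, hsupp, hObcard]
    · have hk1' : sc - k = 1 := by omega
      have hfix : c' b = b := by
        have h1 := orbb 1
        rw [pow_one, hk1', Nat.mod_self, Nat.add_zero, hkb] at h1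
        exact h1
      rw [(cycleOf_eq_one_iff c').2 hfix, fullCycleType_one, hk1']
      have hd : d - 1 + 1 = d := by omega
      conv_lhs => rw [← hd]
      rw [Multiset.replicate_succ]
  have hdisj' : (c'.cycleOf a).Disjoint (c'.cycleOf b) := by
    intro x
    by_cases h1 : c'.SameCycle a x
    · right
      exact cycleOf_apply_of_not_sameCycle (fun h2 => hnotSC (h1.trans h2.symm))
    · left
      exact cycleOf_apply_of_not_sameCycle h1
  have hdecomp : c' = c'.cycleOf a * c'.cycleOf b := by
    apply Equiv.ext
    intro x
    have hmul : (c'.cycleOf a * c'.cycleOf b) x = (c'.cycleOf a) ((c'.cycleOf b) x) := rfl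
    rw [hmul]
    by_cases h1 : c'.SameCycle a x
    · have h2 : ¬ c'.SameCycle b x := fun h2 => hnotSC (h1.trans h2.symm)
      rw [cycleOf_apply_of_not_sameCycle h2, h1.cycleOf_apply]
    · by_cases h2 : c'.SameCycle b x
      · rw [h2.cycleOf_apply,
          cycleOf_apply_of_not_sameCycle (fun h3 => h1 (sameCycle_apply_right.1 h3))]
      · rw [cycleOf_apply_of_not_sameCycle h2, cycleOf_apply_of_not_sameCycle h1]
        exact hfixround x h1 h2
  have l1 : fullCycleType c' + Multiset.replicate d 1
      = (k ::ₘ Multiset.replicate (d - k) 1)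
        + ((sc - k) ::ₘ Multiset.replicate (d - (sc - k)) 1) := by
    conv_lhs => rw [hdecomp]
    rw [fullCycleType_mul_disjoint hdisj', hpieceA, hpieceB]
  have hmemF : c ∈ π.cycleFactorsFinset := cycleOf_mem_cycleFactorsFinset_iff.2 (mem_support.2 ha)
  have hdisjρ : (π * c⁻¹).Disjoint c := disjoint_mul_inv_of_mem_cycleFactorsFinset hmemF
  have hρc : π * c⁻¹ * c = π := inv_mul_cancel_right π c
  have hsubswap : (Equiv.swap a b).support ⊆ c.support := by
    rw [Equiv.Perm.support_swap hab]
    intro y hy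
    rcases Finset.mem_insert.1 hy with rfl | hy
    · exact hamem
    · rw [Finset.mem_singleton.1 hy]; exact hbmem
  have hdisjswap : (π * c⁻¹).Disjoint (Equiv.swap a b) :=
    disjoint_iff_disjoint_support.2
      (Finset.disjoint_of_subset_right hsubswap (disjoint_iff_disjoint_support.1 hdisjρ))
  have hsubc' : c'.support ⊆ c.support := by
    intro y hy
    have hy' := Equiv.Perm.support_mul_le (Equiv.swap a b) c hy
    simp only [Finset.sup_eq_union, Finset.mem_union] at hy'
    rcases hy' with h | h
    · exact hsubswap h
    · exact h
  have hdisj2 : (π * c⁻¹).Disjoint c' :=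
    disjoint_iff_disjoint_support.2
      (Finset.disjoint_of_subset_right hsubc' (disjoint_iff_disjoint_support.1 hdisjρ))
  have hπ' : Equiv.swap a b * π = (π * c⁻¹) * c' := by
    rw [hc']
    conv_lhs => rw [← hρc]
    rw [← mul_assoc, ← hdisjswap.commute.eq, mul_assoc]
  have l2 : fullCycleType (Equiv.swap a b * π) + Multiset.replicate d 1
      = fullCycleType (π * c⁻¹) + fullCycleType c' := by
    rw [hπ']; exact fullCycleType_mul_disjoint hdisj2
  have l3 : fullCycleType π + Multiset.replicate d 1
      = fullCycleType (π * c⁻¹) + fullCycleType c := by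
    conv_lhs => rw [← hρc]
    exact fullCycleType_mul_disjoint hdisjρ
  have l4 : fullCycleType c = sc ::ₘ Multiset.replicate (d - sc) 1 :=
    fullCycleType_isCycle (isCycle_cycleOf π ha)
  have expl : (k ::ₘ Multiset.replicate (d - k) 1)
        + ((sc - k) ::ₘ Multiset.replicate (d - (sc - k)) 1) + ({sc} : Multiset ℕ)
      = (sc ::ₘ Multiset.replicate (d - sc) 1) + Multiset.replicate d 1
        + ({k, sc - k} : Multiset ℕ) := by
    rw [Multiset.ext]
    intro n
    simp only [Multiset.count_add, Multiset.count_cons, Multiset.count_replicate,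
      Multiset.insert_eq_cons, Multiset.count_singleton]
    split_ifs <;> omega
  have key : fullCycleType (Equiv.swap a b * π) + {sc}
        + (Multiset.replicate d 1 + Multiset.replicate d 1)
      = fullCycleType π + {k, sc - k}
        + (Multiset.replicate d 1 + Multiset.replicate d 1) := by
    calc fullCycleType (Equiv.swap a b * π) + {sc}
          + (Multiset.replicate d 1 + Multiset.replicate d 1)
        = (fullCycleType (Equiv.swap a b * π) + Multiset.replicate d 1)
            + (Multiset.replicate d 1 + {sc}) := by abel
      _ = (fullCycleType (π * c⁻¹) + fullCycleType c') + (Multiset.replicate d 1 + {sc}) := by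
          rw [l2]
      _ = fullCycleType (π * c⁻¹) + ((fullCycleType c' + Multiset.replicate d 1) + {sc}) := by
          abel
      _ = fullCycleType (π * c⁻¹) + ((k ::ₘ Multiset.replicate (d - k) 1)
            + ((sc - k) ::ₘ Multiset.replicate (d - (sc - k)) 1) + {sc}) := by rw [l1]
      _ = fullCycleType (π * c⁻¹) + ((sc ::ₘ Multiset.replicate (d - sc) 1)
            + Multiset.replicate d 1 + {k, sc - k}) := by rw [expl]
      _ = fullCycleType (π * c⁻¹) + (fullCycleType c
            + Multiset.replicate d 1 + {k, sc - k}) := by rw [l4]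
      _ = (fullCycleType (π * c⁻¹) + fullCycleType c)
            + (Multiset.replicate d 1 + {k, sc - k}) := by abel
      _ = (fullCycleType π + Multiset.replicate d 1)
            + (Multiset.replicate d 1 + {k, sc - k}) := by rw [l3]
      _ = fullCycleType π + {k, sc - k}
            + (Multiset.replicate d 1 + Multiset.replicate d 1) := by abel
  exact add_right_cancel key

lemma mem_support_of_sameCycle {π : Equiv.Perm (Fin d)} {a b : Fin d} (hab : a ≠ b)
    (h : π.SameCycle a b) : a ∈ π.support ∧ b ∈ π.support := by
  constructor
  · rw [mem_support]
    intro hfix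
    obtain ⟨i, hi⟩ := h
    rw [zpow_apply_eq_self_of_apply_eq_self hfix] at hi
    exact hab hi
  · rw [mem_support]
    intro hfix
    obtain ⟨i, hi⟩ := h.symm
    rw [zpow_apply_eq_self_of_apply_eq_self hfix] at hi
    exact hab hi.symm

lemma ell_split {π : Equiv.Perm (Fin d)} {a b : Fin d} (hab : a ≠ b)
    (h : π.SameCycle a b) : ell (Equiv.swap a b * π) = ell π + 1 := by
  have ha := (mem_support_of_sameCycle hab h).1
  obtain ⟨i, hi, hib⟩ := h.exists_pow_eq_of_mem_support ha
  have hi0 : 0 < i := by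
    rcases Nat.eq_zero_or_pos i with rfl | h0
    · simp at hib; exact absurd hib hab
    · exact h0
  have key := split_lemma hab hi0 hi hib
  have := congrArg Multiset.card key
  simp only [Multiset.card_add, Multiset.card_singleton, Multiset.insert_eq_cons,
    Multiset.card_cons] at this
  rw [← ell_eq_card, ← ell_eq_card] at this
  omega

lemma sameCycle_swap_mul {π : Equiv.Perm (Fin d)} {a b : Fin d} (hab : a ≠ b)
    (h : ¬ π.SameCycle a b) : (Equiv.swap a b * π).SameCycle a b := by
  classical
  by_cases hfix : π b = b
  · refine SameCycle.symm ⟨1, ?_⟩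
    simp [zpow_one, Equiv.Perm.mul_apply, hfix]
  · set m := (π.cycleOf b).support.card with hm
    have hbmem : b ∈ (π.cycleOf b).support :=
      mem_support_cycleOf_iff.2 ⟨SameCycle.refl _ _, mem_support.2 hfix⟩
    have hcyc : π.IsCycleOn (π.cycleOf b).support := isCycleOn_support_cycleOf π b
    have hm_pos : 0 < m := Finset.card_pos.2 ⟨b, hbmem⟩
    have hret : (π ^ m) b = b := hcyc.pow_card_apply hbmem
    have hstep : ∀ i : ℕ, i < m → ((Equiv.swap a b * π) ^ i) b = (π ^ i) b := by
      intro i hi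
      induction i with
      | zero => simp
      | succ i ih =>
        have hi' : i < m := by omega
        rw [pow_succ', Equiv.Perm.mul_apply, ih hi', Equiv.Perm.mul_apply]
        have hne_b : π ((π ^ i) b) ≠ b := by
          intro hcontra
          have : (π ^ (i+1)) b = b := by
            rw [pow_succ', Equiv.Perm.mul_apply]; exact hcontra
          have hdvd := (hcyc.pow_apply_eq hbmem).1 this
          have := Nat.le_of_dvd (by omega) hdvd
          omega
        have hne_a : π ((π ^ i) b) ≠ a := by
          intro hcontra
          apply h
          refine SameCycle.symm ⟨((i+1 : ℕ) : ℤ), ?_⟩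
          rw [zpow_natCast, pow_succ', Equiv.Perm.mul_apply]
          exact hcontra
        rw [Equiv.swap_apply_of_ne_of_ne hne_a hne_b]
        rw [← Equiv.Perm.mul_apply, ← pow_succ']
    have hfinal : ((Equiv.swap a b * π) ^ m) b = a := by
      have hm1 : m - 1 < m := by omega
      have : m = (m - 1) + 1 := by omega
      rw [this, pow_succ', Equiv.Perm.mul_apply, hstep (m-1) hm1, Equiv.Perm.mul_apply]
      have : π ((π ^ (m-1)) b) = b := by
        rw [← Equiv.Perm.mul_apply, ← pow_succ', ← this, hret]
      rw [this, Equiv.swap_apply_right]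
    exact SameCycle.symm ⟨(m : ℤ), by rw [zpow_natCast]; exact hfinal⟩

lemma ell_merge {π : Equiv.Perm (Fin d)} {a b : Fin d} (hab : a ≠ b)
    (h : ¬ π.SameCycle a b) : ell (Equiv.swap a b * π) + 1 = ell π := by
  have hsc := sameCycle_swap_mul hab h
  have key := ell_split hab hsc
  have hswap : Equiv.swap a b * (Equiv.swap a b * π) = π := by
    rw [← mul_assoc, Equiv.swap_mul_self, one_mul]
  rw [hswap] at key
  omega

lemma length_lower_bound : ∀ (m : List (Fin d × Fin d)), (∀ p ∈ m, p.1 ≠ p.2) →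
    ∀ {π : Equiv.Perm (Fin d)}, (m.map toSwap).prod = π → d ≤ ell π + m.length := by
  intro m
  induction m with
  | nil =>
    intro _ π hπ
    simp at hπ
    rw [← hπ, ell_one]
    simp
  | cons p t ih =>
    intro hne π hπ
    simp only [List.map_cons, List.prod_cons] at hπ
    have hne_p : p.1 ≠ p.2 := hne p (List.mem_cons_self)
    have ht : (t.map toSwap).prod = Equiv.swap p.1 p.2 * π := by
      rw [← hπ, toSwap, ← mul_assoc, Equiv.swap_mul_self, one_mul]
    have hih := ih (fun q hq => hne q (List.mem_cons_of_mem p hq)) ht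
    by_cases hsc : π.SameCycle p.1 p.2
    · have := ell_split hne_p hsc
      simp only [List.length_cons]
      omega
    · have := ell_merge hne_p hsc
      simp only [List.length_cons]
      omega

lemma fixed_of_gt {m : List (Fin d × Fin d)} {t : Fin d} (hlt : ∀ p ∈ m, p.1 < p.2)
    (hle : ∀ p ∈ m, p.2 ≤ t) {x : Fin d} (hx : t < x) : ((m.map toSwap).prod) x = x := by
  induction m with
  | nil => simp
  | cons p s ih =>
    simp only [List.map_cons, List.prod_cons, Equiv.Perm.mul_apply]
    rw [ih (fun q hq => hlt q (List.mem_cons_of_mem p hq))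
      (fun q hq => hle q (List.mem_cons_of_mem p hq))]
    have h1 : p.1 < p.2 := hlt p (List.mem_cons_self)
    have h2 : p.2 ≤ t := hle p (List.mem_cons_self)
    have hx1 : p.1 < x := lt_trans h1 (lt_of_le_of_lt h2 hx)
    have hx2 : p.2 < x := lt_of_le_of_lt h2 hx
    exact Equiv.swap_apply_of_ne_of_ne (ne_of_gt hx1) (ne_of_gt hx2)

lemma support_swap_mul_subset {π : Equiv.Perm (Fin d)} {a b : Fin d}
    (ha : a ∈ π.support) (hb : b ∈ π.support) :
    (Equiv.swap a b * π).support ⊆ π.support := by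
  intro x hx
  by_contra hxs
  have hfix : π x = x := by
    rw [← notMem_support]; exact hxs
  have hxa : x ≠ a := fun h => hxs (h ▸ ha)
  have hxb : x ≠ b := fun h => hxs (h ▸ hb)
  apply mem_support.1 hx
  rw [Equiv.Perm.mul_apply, hfix, Equiv.swap_apply_of_ne_of_ne hxa hxb]

lemma minsupp : ∀ (m : List (Fin d × Fin d)), (∀ p ∈ m, p.1 ≠ p.2) →
    ∀ {π : Equiv.Perm (Fin d)}, (m.map toSwap).prod = π → m.length + ell π = d →
    ∀ p ∈ m, p.1 ∈ π.support ∧ p.2 ∈ π.support := by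
  intro m
  induction m with
  | nil => intro _ π _ _ p hp; simp at hp
  | cons q t ih =>
    intro hne π hπ hlen p hp
    simp only [List.map_cons, List.prod_cons] at hπ
    have hne_q : q.1 ≠ q.2 := hne q (List.mem_cons_self)
    have ht : (t.map toSwap).prod = Equiv.swap q.1 q.2 * π := by
      rw [← hπ, toSwap, ← mul_assoc, Equiv.swap_mul_self, one_mul]
    have hlb := length_lower_bound t (fun r hr => hne r (List.mem_cons_of_mem q hr)) ht
    have hsc : π.SameCycle q.1 q.2 := by
      by_contra hsc
      have := ell_merge hne_q hsc
      simp only [List.length_cons] at hlen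
      omega
    have hqsupp := mem_support_of_sameCycle hne_q hsc
    rcases List.mem_cons.1 hp with rfl | hp
    · exact hqsupp
    · have hsplit := ell_split hne_q hsc
      have hlen' : t.length + ell (Equiv.swap q.1 q.2 * π) = d := by
        simp only [List.length_cons] at hlen
        omega
      have hres := ih (fun r hr => hne r (List.mem_cons_of_mem q hr)) ht hlen' p hp
      have hsub := support_swap_mul_subset hqsupp.1 hqsupp.2
      exact ⟨hsub hres.1, hsub hres.2⟩

def Wge (d : ℕ) (r : ℕ) (π : Equiv.Perm (Fin d)) : ℕ :=
  Nat.card {m : List (Fin d × Fin d) // m.length = r ∧ (∀ p ∈ m, p.1 < p.2) ∧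
    (m.map Prod.snd).Pairwise (· ≥ ·) ∧ (m.map toSwap).prod = π}

instance finT {X : Type*} [Finite X] (r : ℕ) (Q : List X → Prop) :
    Finite {m : List X // m.length = r ∧ Q m} :=
  Set.Finite.to_subtype
    ((List.finite_length_eq X r).subset (fun m hm => hm.1))

lemma rev_prod_eq (l : List (Fin d × Fin d)) :
    ((l.reverse.map toSwap).prod) = ((l.map toSwap).prod)⁻¹ := by
  rw [List.map_reverse, List.prod_reverse_noncomm, List.map_map]
  congr 1

lemma sorted_rev_iff (l : List (Fin d × Fin d)) :
    ((l.reverse.map Prod.snd).Pairwise (· ≥ ·)) ↔ ((l.map Prod.snd).Pairwise (· ≤ ·)) := by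
  rw [List.map_reverse, List.pairwise_reverse]

lemma Wle_eq_Wge (r : ℕ) (ρ σ : Equiv.Perm (Fin d)) : Wle d r ρ σ = Wge d r (σ⁻¹ * ρ) := by
  apply Nat.card_congr
  refine ⟨fun x => ⟨x.1.reverse, ?_⟩, fun y => ⟨y.1.reverse, ?_⟩,
    fun x => Subtype.ext (List.reverse_reverse _), fun y => Subtype.ext (List.reverse_reverse _)⟩
  · obtain ⟨l, hlen, hlt, hsort, hprod⟩ := x
    refine ⟨by simpa using hlen, fun p hp => hlt p (List.mem_reverse.1 hp),
      (sorted_rev_iff _).2 hsort, ?_⟩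
    have hl : (l.map toSwap).prod = ρ⁻¹ * σ := by rw [← hprod]; group
    rw [rev_prod_eq, hl]
    group
  · obtain ⟨m, hlen, hlt, hsort, hprod⟩ := y
    refine ⟨by simpa using hlen, fun p hp => hlt p (List.mem_reverse.1 hp), ?_, ?_⟩
    · have h2 : ((m.reverse.reverse.map Prod.snd).Pairwise (· ≥ ·)) := by
        rw [List.reverse_reverse]; exact hsort
      exact (sorted_rev_iff m.reverse).1 h2
    · rw [rev_prod_eq, hprod]
      group

lemma Wge_zero_one : Wge d 0 (1 : Equiv.Perm (Fin d)) = 1 := by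
  rw [Wge, Nat.card_eq_one_iff_unique]
  constructor
  · constructor
    intro x y
    apply Subtype.ext
    rw [List.length_eq_zero_iff.1 x.2.1, List.length_eq_zero_iff.1 y.2.1]
  · exact ⟨⟨[], by simp⟩⟩

lemma key_step {π : Equiv.Perm (Fin d)} {r : ℕ} (hr : d = ell π + (r+1)) {M : Fin d}
    (hM : M ∈ π.support) (hMmax : ∀ x ∈ π.support, x ≤ M)
    {p : Fin d × Fin d} {t : List (Fin d × Fin d)}
    (hlen : (p :: t).length = r + 1)
    (hlt : ∀ q ∈ p :: t, q.1 < q.2)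
    (hsort : (((p :: t)).map Prod.snd).Pairwise (· ≥ ·))
    (hprod : (((p :: t)).map toSwap).prod = π) :
    p.2 = M ∧ p.1 ∈ (π.cycleOf M).support.erase M
      ∧ (t.map toSwap).prod = Equiv.swap p.1 M * π := by
  have hne : p.1 ≠ p.2 := ne_of_lt (hlt p (List.mem_cons_self))
  simp only [List.map_cons, List.prod_cons] at hprod
  have ht : (t.map toSwap).prod = Equiv.swap p.1 p.2 * π := by
    rw [← hprod, toSwap, ← mul_assoc, Equiv.swap_mul_self, one_mul]
  have hlb := length_lower_bound t (fun q hq => ne_of_lt (hlt q (List.mem_cons_of_mem p hq))) ht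
  have htlen : t.length = r := by simpa using hlen
  have hsc : π.SameCycle p.1 p.2 := by
    by_contra hsc
    have := ell_merge hne hsc
    omega
  have hsupp := mem_support_of_sameCycle hne hsc
  have hble : p.2 ≤ M := hMmax _ hsupp.2
  have hsle : ∀ q ∈ t, q.2 ≤ p.2 := fun q hq =>
    (List.pairwise_cons.1 hsort).1 q.2 (List.mem_map_of_mem (f := Prod.snd) hq)
  have hMle : M ≤ p.2 := by
    by_contra hlt'
    push_neg at hlt'
    have hfixM : π M = M := by
      rw [← hprod, Equiv.Perm.mul_apply,
        fixed_of_gt (fun q hq => hlt q (List.mem_cons_of_mem p hq)) hsle hlt']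
      exact Equiv.swap_apply_of_ne_of_ne
        (ne_of_gt (lt_trans (hlt p (List.mem_cons_self)) hlt'))
        (ne_of_gt hlt')
    exact absurd hfixM (mem_support.1 hM)
  have hM2 : p.2 = M := le_antisymm hble hMle
  refine ⟨hM2, Finset.mem_erase.2 ⟨hM2 ▸ hne, mem_support_cycleOf_iff.2 ⟨hM2 ▸ hsc.symm, hM⟩⟩,
    by rw [← hM2]; exact ht⟩

lemma key_inv {π : Equiv.Perm (Fin d)} {r : ℕ} (hr : d = ell π + (r+1)) {M : Fin d}
    (hM : M ∈ π.support) (hMmax : ∀ x ∈ π.support, x ≤ M)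
    {a : Fin d} (ha : a ∈ (π.cycleOf M).support.erase M)
    {t : List (Fin d × Fin d)} (hlen : t.length = r) (hlt : ∀ q ∈ t, q.1 < q.2)
    (hsort : (t.map Prod.snd).Pairwise (· ≥ ·))
    (hprod : (t.map toSwap).prod = Equiv.swap a M * π) :
    ((a, M) :: t).length = r+1 ∧ (∀ q ∈ (a,M) :: t, q.1 < q.2)
      ∧ ((((a,M) :: t)).map Prod.snd).Pairwise (· ≥ ·)
      ∧ ((((a,M) :: t)).map toSwap).prod = π := by
  obtain ⟨haM, hamem⟩ := Finset.mem_erase.1 ha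
  have hscMa : π.SameCycle M a := (mem_support_cycleOf_iff.1 hamem).1
  have hasupp : a ∈ π.support := (hscMa.mem_support_iff).1 hM
  have haltM : a < M := lt_of_le_of_ne (hMmax a hasupp) haM
  have hsplit : ell (Equiv.swap a M * π) = ell π + 1 := ell_split haM hscMa.symm
  have hlen' : t.length + ell (Equiv.swap a M * π) = d := by omega
  have hms := minsupp t (fun q hq => ne_of_lt (hlt q hq)) hprod hlen'
  have hsub : (Equiv.swap a M * π).support ⊆ π.support := support_swap_mul_subset hasupp hM
  refine ⟨by simp [hlen], ?_, ?_, ?_⟩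
  · intro q hq
    rcases List.mem_cons.1 hq with rfl | hq
    · exact haltM
    · exact hlt q hq
  · rw [List.map_cons]
    refine List.pairwise_cons.2 ⟨?_, hsort⟩
    intro y hy
    obtain ⟨q, hq, rfl⟩ := List.mem_map.1 hy
    exact hMmax q.2 (hsub (hms q hq).2)
  · rw [List.map_cons, List.prod_cons, hprod, toSwap, ← mul_assoc, Equiv.swap_mul_self, one_mul]

set_option maxHeartbeats 1000000 in
lemma Wge_rec {π : Equiv.Perm (Fin d)} {r : ℕ} (hr : d = ell π + (r+1)) {M : Fin d}
    (hM : M ∈ π.support) (hMmax : ∀ x ∈ π.support, x ≤ M) :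
    Wge d (r+1) π = ∑ a ∈ (π.cycleOf M).support.erase M, Wge d r (Equiv.swap a M * π) := by
  classical
  set A := (π.cycleOf M).support.erase M with hA
  let F : Fin d → Type _ := fun a => {t : List (Fin d × Fin d) // t.length = r
    ∧ (∀ p ∈ t, p.1 < p.2) ∧ (t.map Prod.snd).Pairwise (· ≥ ·)
    ∧ (t.map toSwap).prod = Equiv.swap a M * π}
  let T := {m : List (Fin d × Fin d) // m.length = r+1 ∧ (∀ p ∈ m, p.1 < p.2)
    ∧ (m.map Prod.snd).Pairwise (· ≥ ·) ∧ (m.map toSwap).prod = π}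
  let g : (Σ a : {a // a ∈ A}, F a.1) → T := fun x =>
    ⟨(x.1.1, M) :: x.2.1, key_inv hr hM hMmax x.1.2 x.2.2.1 x.2.2.2.1 x.2.2.2.2.1 x.2.2.2.2.2⟩
  have hbij : Function.Bijective g := by
    constructor
    · rintro ⟨⟨a, ha⟩, ⟨t, htp⟩⟩ ⟨⟨a2, ha2⟩, ⟨t2, ht2p⟩⟩ hxy
      have : (a, M) :: t = (a2, M) :: t2 := congrArg Subtype.val hxy
      simp only [List.cons.injEq, Prod.mk.injEq] at this
      obtain ⟨⟨h1, -⟩, h2⟩ := this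
      subst h1; subst h2; rfl
    · rintro ⟨m, hm⟩
      obtain ⟨hlen, hlt, hsort, hprod⟩ := hm
      cases m with
      | nil => simp at hlen
      | cons p t =>
        obtain ⟨hM2, haA, hprod'⟩ := key_step hr hM hMmax hlen hlt hsort hprod
        have hsort' : (t.map Prod.snd).Pairwise (· ≥ ·) := (List.pairwise_cons.1 hsort).2
        refine ⟨⟨⟨p.1, haA⟩, ⟨t, by simpa using hlen,
          fun q hq => hlt q (List.mem_cons_of_mem p hq), hsort', hprod'⟩⟩, ?_⟩
        apply Subtype.ext
        show (p.1, M) :: t = p :: t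
        rw [← hM2]
  have e : (Σ a : {a // a ∈ A}, F a.1) ≃ T := Equiv.ofBijective g hbij
  have h1 : Wge d (r+1) π = Nat.card T := rfl
  rw [h1, ← Nat.card_congr e]
  letI : ∀ (a : {a // a ∈ A}), Fintype (F a.1) := fun a => Fintype.ofFinite _
  rw [Nat.card_eq_fintype_card, Fintype.card_sigma]
  have h2 : ∀ a : {a // a ∈ A}, Fintype.card (F a.1) = Wge d r (Equiv.swap a.1 M * π) := by
    intro a
    rw [← Nat.card_eq_fintype_card]
    rfl
  rw [Finset.sum_congr rfl (fun a _ => h2 a)]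
  exact Finset.sum_coe_sort A (fun a => Wge d r (Equiv.swap a M * π))

lemma catsum {sc : ℕ} (hsc : 2 ≤ sc) :
    ∑ j ∈ Finset.Ico 1 sc, catalan (sc - j - 1) * catalan (j - 1) = catalan (sc - 1) := by
  have h1 : sc - 1 = (sc - 2) + 1 := by omega
  rw [h1, catalan_succ', Nat.sum_antidiagonal_eq_sum_range_succ
    (fun x y => catalan x * catalan y), Finset.sum_Ico_eq_sum_range]
  have h2 : (sc - 2).succ = sc - 1 := by omega
  rw [h2]
  apply Finset.sum_congr rfl
  intro i hi
  have hilt : i < sc - 1 := by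
    have := Finset.mem_range.1 hi
    omega
  have e1 : 1 + i - 1 = i := by omega
  have e2 : sc - (1 + i) - 1 = sc - 2 - i := by omega
  rw [e1, e2, mul_comm]

def rhs (π : Equiv.Perm (Fin d)) : ℕ := ((fullCycleType π).map fun a => catalan (a - 1)).prod

set_option maxHeartbeats 1000000 in
lemma main : ∀ (r : ℕ) (π : Equiv.Perm (Fin d)), d = ell π + r → Wge d r π = rhs π := by
  intro r
  induction r with
  | zero =>
    intro π hπ
    have h1 : π = 1 := by
      by_contra h
      have := ell_lt_of_ne_one h
      omega
    subst h1
    rw [Wge_zero_one, rhs, fullCycleType_one]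
    simp [Multiset.map_replicate]
  | succ r ih =>
    intro π hπd
    have hπ : π ≠ 1 := fun h => by rw [h, ell_one] at hπd; omega
    have hnon : π.support.Nonempty :=
      Finset.nonempty_iff_ne_empty.2 (fun h => hπ (support_eq_empty_iff.1 h))
    set M := π.support.max' hnon with hMdef
    have hM : M ∈ π.support := π.support.max'_mem hnon
    have hMmax : ∀ x ∈ π.support, x ≤ M := fun x hx => Finset.le_max' _ x hx
    set sc := (π.cycleOf M).support.card with hsc
    have hMne : π M ≠ M := mem_support.1 hM
    have hMmem : M ∈ (π.cycleOf M).support :=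
      mem_support_cycleOf_iff.2 ⟨Equiv.Perm.SameCycle.refl _ _, hM⟩
    have hcyc : π.IsCycleOn (π.cycleOf M).support := isCycleOn_support_cycleOf π M
    have hscd : sc ≤ d := card_support_le _
    have hsc2 : 2 ≤ sc := (isCycle_cycleOf π hMne).two_le_card_support
    have hinj : ∀ {i j : ℕ}, i < sc → j < sc → (π ^ i) M = (π ^ j) M → i = j := by
      intro i j hi hj hij
      have h1 : i ≡ j [MOD sc] := (hcyc.pow_apply_eq_pow_apply hMmem).1 hij
      have h2 : i % sc = j % sc := h1
      rwa [Nat.mod_eq_of_lt hi, Nat.mod_eq_of_lt hj] at h2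
    have hpow_mem : ∀ i : ℕ, (π ^ i) M ∈ (π.cycleOf M).support := fun i =>
      mem_support_cycleOf_iff.2 ⟨⟨(i : ℤ), by rw [zpow_natCast]⟩, hM⟩
    have hsc_pow : (π ^ sc) M = M := hcyc.pow_card_apply hMmem
    have hindex : (π.cycleOf M).support.erase M
        = (Finset.Ico 1 sc).image (fun j => (π ^ j) M) := by
      ext y
      simp only [Finset.mem_erase, Finset.mem_image, Finset.mem_Ico]
      constructor
      · rintro ⟨hyne, hymem⟩
        obtain ⟨i, hi, rfl⟩ :=
          (mem_support_cycleOf_iff.1 hymem).1.exists_pow_eq_of_mem_support hM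
        have hi0 : i ≠ 0 := fun h => by
          subst h; simp at hyne
        exact ⟨i, ⟨by omega, hi⟩, rfl⟩
      · rintro ⟨j, ⟨hj1, hj2⟩, rfl⟩
        refine ⟨fun h => ?_, hpow_mem j⟩
        have := hinj hj2 (by omega : 0 < sc) (by simpa using h)
        omega
    have hinjOn : Set.InjOn (fun j => (π ^ j) M) (Finset.Ico 1 sc) := by
      intro i hi j hj hij
      simp only [Finset.coe_Ico, Set.mem_Ico] at hi hj
      exact hinj (by omega) (by omega) hij
    rw [Wge_rec hπd hM hMmax, hindex, Finset.sum_image (fun i hi j hj h => hinjOn hi hj h)]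
    have hterm : ∀ j ∈ Finset.Ico 1 sc,
        Wge d r (Equiv.swap ((π ^ j) M) M * π) * catalan (sc - 1)
          = rhs π * (catalan (sc - j - 1) * catalan (j - 1)) := by
      intro j hj
      obtain ⟨hj1, hj2⟩ := Finset.mem_Ico.1 hj
      set a := (π ^ j) M with hadef
      have hane : a ≠ M := fun h => by
        have := hinj hj2 (by omega : 0 < sc) (by simpa using h)
        omega
      have hscMa : π.SameCycle M a := ⟨(j : ℤ), by rw [zpow_natCast]⟩
      have hscEq : (π.cycleOf a).support.card = sc := by
        rw [← hscMa.cycleOf_eq]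
      have hk : (π ^ (sc - j)) a = M := by
        rw [hadef, ← Equiv.Perm.mul_apply, ← pow_add]
        have he : sc - j + j = sc := by omega
        rw [he, hsc_pow]
      have hsplitm := split_lemma hane (show 0 < sc - j by omega)
        (show sc - j < (π.cycleOf a).support.card by rw [hscEq]; omega) hk
      rw [hscEq] at hsplitm
      have he2 : sc - (sc - j) = j := by omega
      rw [he2] at hsplitm
      have hell : ell (Equiv.swap a M * π) = ell π + 1 := ell_split hane hscMa.symm
      have hd' : d = ell (Equiv.swap a M * π) + r := by omega
      rw [ih _ hd']
      have hmap := congrArg (fun s => (s.map (fun n => catalan (n-1))).prod) hsplitm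
      simp only [Multiset.map_add, Multiset.prod_add, Multiset.map_singleton,
        Multiset.prod_singleton, Multiset.insert_eq_cons, Multiset.map_cons,
        Multiset.prod_cons] at hmap
      rw [rhs, rhs]
      exact hmap
    have hsum : (∑ j ∈ Finset.Ico 1 sc, Wge d r (Equiv.swap ((π ^ j) M) M * π)) * catalan (sc-1)
        = rhs π * ∑ j ∈ Finset.Ico 1 sc, (catalan (sc - j - 1) * catalan (j - 1)) := by
      rw [Finset.sum_mul, Finset.mul_sum]
      exact Finset.sum_congr rfl hterm
    rw [catsum hsc2] at hsum
    exact Nat.eq_of_mul_eq_mul_right (catalan_pos (sc - 1)) hsum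

end WleAux

/-- The number of weakly monotone geodesics `ρ → σ` in the Hurwitz–Cayley graph,
i.e. weakly monotone factorizations of `ρ⁻¹σ` into the minimal number `d - ℓ(ρ⁻¹σ)` of
transpositions, equals `∏_i Cat_{α_i - 1}` where `α` is the cycle type (with fixed points) of
`ρ⁻¹σ` and `Cat_n` is the Catalan number. -/
theorem Wle_geodesic_count (d : ℕ) (hd : 1 ≤ d) (ρ σ : Equiv.Perm (Fin d)) :
    Wle d (d - ell (ρ⁻¹ * σ)) ρ σ =
      ((fullCycleType (ρ⁻¹ * σ)).map fun a => catalan (a - 1)).prod := by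
  have h1 := WleAux.Wle_eq_Wge (d - ell (ρ⁻¹ * σ)) ρ σ
  have h2 : σ⁻¹ * ρ = (ρ⁻¹ * σ)⁻¹ := by group
  have h3 : ell ((ρ⁻¹ * σ)⁻¹) = ell (ρ⁻¹ * σ) := WleAux.ell_inv _
  have h4 := WleAux.main (d - ell (ρ⁻¹ * σ)) ((ρ⁻¹ * σ)⁻¹)
    (by have := WleAux.ell_le (ρ⁻¹ * σ); omega)
  rw [h1, h2, h4, WleAux.rhs, WleAux.fullCycleType_inv]
end
end

section
/- Let d ≥ 1 and let q be a complex number with |q| < 1/(d−1) (no condition when d = 1). Then the exponential distance matrix Ω_q, with entries (Ω_q)_{σρ} = q^{d−ℓ(ρ⁻¹σ)} for ρ, σ ∈ S_d, is invertible, and each entry of its inverse is given by the absolutely convergent series (Ω_q⁻¹)_{σρ} = ∑_{r=0}^{∞} (−q)^r W^r_≤(ρ,σ), where W^r_≤(ρ,σ) is the number of weakly monotone r-step walks from ρ to σ in the Hurwitz–Cayley graph. -/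
noncomputable section

/-- The exponential distance matrix of the Hurwitz–Cayley graph: the matrix whose `(σ, ρ)` entry
is `q` raised to the graph distance `d - ℓ(ρ⁻¹σ)` between `ρ` and `σ`. -/
def Omega (d : ℕ) (q : ℂ) : Matrix (Equiv.Perm (Fin d)) (Equiv.Perm (Fin d)) ℂ :=
  Matrix.of fun σ ρ => q ^ (d - ell (ρ⁻¹ * σ))

namespace OmegaProof


open Equiv Equiv.Perm Finset Matrix
open scoped Classical

variable {d : ℕ}

abbrev Mat (d : ℕ) := Matrix (Equiv.Perm (Fin d)) (Equiv.Perm (Fin d)) ℂ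

def prodSwaps (l : List (Fin d × Fin d)) : Equiv.Perm (Fin d) := (l.map toSwap).prod

@[simp] lemma prodSwaps_nil : prodSwaps ([] : List (Fin d × Fin d)) = 1 := rfl

@[simp] lemma prodSwaps_cons (p : Fin d × Fin d) (l : List (Fin d × Fin d)) :
    prodSwaps (p :: l) = toSwap p * prodSwaps l := by simp [prodSwaps]

lemma prodSwaps_append (l₁ l₂ : List (Fin d × Fin d)) :
    prodSwaps (l₁ ++ l₂) = prodSwaps l₁ * prodSwaps l₂ := by simp [prodSwaps]

/-- weakly monotone with tops `< t` -/
def PW (t : ℕ) (l : List (Fin d × Fin d)) : Prop :=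
  (∀ p ∈ l, p.1 < p.2 ∧ (p.2 : ℕ) < t) ∧ (l.map Prod.snd).Pairwise (· ≤ ·)

/-- all tops equal to `t` -/
def PV (t : ℕ) (l : List (Fin d × Fin d)) : Prop := ∀ p ∈ l, p.1 < p.2 ∧ (p.2 : ℕ) = t

def Wk (d t r : ℕ) (ρ σ : Equiv.Perm (Fin d)) : ℕ :=
  Nat.card {l : List (Fin d × Fin d) // l.length = r ∧ PW t l ∧ ρ * prodSwaps l = σ}

def Vc (d t s : ℕ) (τ σ : Equiv.Perm (Fin d)) : ℕ :=
  Nat.card {l : List (Fin d × Fin d) // l.length = s ∧ PV t l ∧ τ * prodSwaps l = σ}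

lemma finite_aux {X : Type*} [Finite X] {P : List X → Prop} {r : ℕ}
    (h : ∀ l, P l → l.length = r) : Finite {l : List X // P l} := by
  refine Finite.of_injective
    (fun l : {l : List X // P l} => (fun i : Fin r => l.1[(i : ℕ)]'(by rw [h _ l.2]; exact i.2))) ?_
  intro a b hab
  apply Subtype.ext
  apply List.ext_getElem (by rw [h _ a.2, h _ b.2])
  intro i h1 h2
  have := congrFun hab ⟨i, by rwa [h _ a.2] at h1⟩
  simpa using this

instance finWk (t r : ℕ) (ρ σ : Equiv.Perm (Fin d)) :
    Finite {l : List (Fin d × Fin d) // l.length = r ∧ PW t l ∧ ρ * prodSwaps l = σ} :=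
  finite_aux (fun _ h => h.1)

instance finVc (t s : ℕ) (τ σ : Equiv.Perm (Fin d)) :
    Finite {l : List (Fin d × Fin d) // l.length = s ∧ PV t l ∧ τ * prodSwaps l = σ} :=
  finite_aux (fun _ h => h.1)

lemma nat_card_sigma {ι : Type*} [Fintype ι] (f : ι → Type*) [∀ i, Finite (f i)] :
    Nat.card ((i : ι) × f i) = ∑ i, Nat.card (f i) := by
  letI : ∀ i, Fintype (f i) := fun i => Fintype.ofFinite _
  simp [Nat.card_eq_fintype_card]



open Equiv Equiv.Perm Finset Matrix
open scoped Classical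

variable {d : ℕ}

def Pt (d t : ℕ) : Finset (Fin d × Fin d) :=
  Finset.univ.filter fun p => p.1 < p.2 ∧ (p.2 : ℕ) = t

lemma card_Pt_le (t : ℕ) : (Pt d t).card ≤ t := by
  have : (Pt d t).card ≤ (Finset.range t).card := by
    apply Finset.card_le_card_of_injOn (fun p => (p.1 : ℕ))
    · rintro ⟨a, b⟩ hp
      simp only [Pt, Finset.coe_filter, Set.mem_setOf_eq, Finset.mem_coe, Finset.mem_filter] at hp
      simp only [Finset.mem_coe, Finset.mem_range]
      have : (a : ℕ) < (b : ℕ) := hp.2.1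
      omega
    · rintro ⟨a, b⟩ hp ⟨a', b'⟩ hp' hab
      simp only [Pt, Finset.coe_filter, Set.mem_setOf_eq] at hp hp'
      have : a = a' := Fin.ext hab
      have hb : b = b' := Fin.ext (hp.2.2.trans hp'.2.2.symm)
      simp [this, hb]
  simpa using this

lemma Vc_zero (t : ℕ) (τ σ : Equiv.Perm (Fin d)) :
    Vc d t 0 τ σ = if τ = σ then 1 else 0 := by
  unfold Vc
  split_ifs with h
  · subst h
    haveI : Nonempty {l : List (Fin d × Fin d) // l.length = 0 ∧ PV t l ∧ τ * prodSwaps l = τ} :=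
      ⟨⟨[], rfl, by simp [PV], by simp⟩⟩
    haveI : Subsingleton {l : List (Fin d × Fin d) // l.length = 0 ∧ PV t l ∧ τ * prodSwaps l = τ} := by
      constructor
      rintro ⟨l, hl, -⟩ ⟨m, hm, -⟩
      apply Subtype.ext
      rw [List.length_eq_zero_iff] at hl hm
      show l = m
      rw [hl, hm]
    exact Nat.card_unique
  · haveI : IsEmpty {l : List (Fin d × Fin d) // l.length = 0 ∧ PV t l ∧ τ * prodSwaps l = σ} := by
      constructor
      rintro ⟨l, hl, -, hprod⟩
      rw [List.length_eq_zero_iff] at hl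
      subst hl
      simp at hprod
      exact h hprod
    exact Nat.card_of_isEmpty

lemma Wk_zero (r : ℕ) (ρ σ : Equiv.Perm (Fin d)) :
    Wk d 0 r ρ σ = if r = 0 ∧ ρ = σ then 1 else 0 := by
  unfold Wk
  split_ifs with h
  · obtain ⟨rfl, rfl⟩ := h
    haveI : Nonempty {l : List (Fin d × Fin d) // l.length = 0 ∧ PW 0 l ∧ ρ * prodSwaps l = ρ} :=
      ⟨⟨[], rfl, ⟨by simp, by simp⟩, by simp⟩⟩
    haveI : Subsingleton {l : List (Fin d × Fin d) // l.length = 0 ∧ PW 0 l ∧ ρ * prodSwaps l = ρ} := by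
      constructor
      rintro ⟨l, hl, -⟩ ⟨m, hm, -⟩
      apply Subtype.ext
      rw [List.length_eq_zero_iff] at hl hm
      show l = m
      rw [hl, hm]
    exact Nat.card_unique
  · haveI : IsEmpty {l : List (Fin d × Fin d) // l.length = r ∧ PW 0 l ∧ ρ * prodSwaps l = σ} := by
      constructor
      rintro ⟨l, hl, ⟨hel, -⟩, hprod⟩
      cases l with
      | nil =>
        simp at hprod hl
        exact h ⟨hl.symm, hprod⟩
      | cons p l' =>
        exact absurd (hel p (by simp)).2 (by omega)
    exact Nat.card_of_isEmpty

lemma Vc_succ (t s : ℕ) (τ σ : Equiv.Perm (Fin d)) :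
    Vc d t (s + 1) τ σ = ∑ p ∈ Pt d t, Vc d t s (τ * toSwap p) σ := by
  have key : Nat.card ((p : (Pt d t : Finset (Fin d × Fin d))) ×
      {l : List (Fin d × Fin d) // l.length = s ∧ PV t l ∧ (τ * toSwap p.1) * prodSwaps l = σ}) =
      Vc d t (s + 1) τ σ := by
    apply Nat.card_eq_of_bijective (fun x => (⟨x.1.1 :: x.2.1, by
      refine ⟨by simp [x.2.2.1], ?_, ?_⟩
      · intro y hy
        rcases List.mem_cons.mp hy with h | h
        · subst h
          have := x.1.2
          simp only [Pt, Finset.mem_filter] at this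
          exact this.2
        · exact x.2.2.2.1 y h
      · rw [prodSwaps_cons, ← mul_assoc]
        exact x.2.2.2.2⟩ :
      {l : List (Fin d × Fin d) // l.length = s + 1 ∧ PV t l ∧ τ * prodSwaps l = σ}))
    constructor
    · rintro ⟨⟨p, hp⟩, ⟨l, h⟩⟩ ⟨⟨p', hp'⟩, ⟨l', h'⟩⟩ hh
      simp only [Subtype.mk.injEq, List.cons.injEq] at hh
      obtain ⟨h1, h2⟩ := hh
      subst h1
      subst h2
      rfl
    · rintro ⟨l, hlen, hPV, hprod⟩
      cases l with
      | nil => simp at hlen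
      | cons p l' =>
        have hp : p ∈ Pt d t := by
          have := hPV p (by simp)
          simp [Pt, this.1, this.2]
        refine ⟨⟨⟨p, hp⟩, ⟨l', by simpa using hlen, fun x hx => hPV x (by simp [hx]), ?_⟩⟩, rfl⟩
        rw [mul_assoc]
        simpa using hprod
  rw [← key, nat_card_sigma]
  rw [← Finset.sum_coe_sort (Pt d t) (fun p => Vc d t s (τ * toSwap p) σ)]
  rfl



open Equiv Equiv.Perm Finset Matrix
open scoped Classical

variable {d : ℕ}

lemma uniq_split {X : Type*} {C D : X → Prop} (hCD : ∀ x, C x → D x → False) :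
    ∀ (l₁ : List X) (m₁ : List X) (l₂ m₂ : List X), (∀ x ∈ l₁, C x) → (∀ x ∈ m₁, C x) →
      (∀ x ∈ l₂, D x) → (∀ x ∈ m₂, D x) → l₁ ++ l₂ = m₁ ++ m₂ → l₁ = m₁ ∧ l₂ = m₂ := by
  intro l₁
  induction l₁ with
  | nil =>
    intro m₁ l₂ m₂ _ hm₁ hl₂ _ heq
    cases m₁ with
    | nil => exact ⟨rfl, heq⟩
    | cons y m₁' =>
      exfalso
      have hyl₂ : y ∈ l₂ := by
        have : l₂ = y :: (m₁' ++ m₂) := by simpa using heq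
        rw [this]; simp
      exact hCD y (hm₁ y (by simp)) (hl₂ y hyl₂)
  | cons x l₁' ih =>
    intro m₁ l₂ m₂ hl₁ hm₁ hl₂ hm₂ heq
    cases m₁ with
    | nil =>
      exfalso
      have hxm₂ : x ∈ m₂ := by
        have : m₂ = x :: (l₁' ++ l₂) := by simpa using heq.symm
        rw [this]; simp
      exact hCD x (hl₁ x (by simp)) (hm₂ x hxm₂)
    | cons y m₁' =>
      simp only [List.cons_append, List.cons.injEq] at heq
      obtain ⟨rfl, heq'⟩ := heq
      obtain ⟨h1, h2⟩ := ih m₁' l₂ m₂ (fun z hz => hl₁ z (by simp [hz]))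
        (fun z hz => hm₁ z (by simp [hz])) hl₂ hm₂ heq'
      exact ⟨by rw [h1], h2⟩

lemma split_exists {t : ℕ} :
    ∀ (l : List (Fin d × Fin d)), (∀ p ∈ l, (p.2 : ℕ) < t + 1) →
      (l.map Prod.snd).Pairwise (· ≤ ·) →
      ∃ l₁ l₂, l = l₁ ++ l₂ ∧ (∀ p ∈ l₁, (p.2 : ℕ) < t) ∧
        ((l₁.map Prod.snd).Pairwise (· ≤ ·)) ∧ (∀ p ∈ l₂, (p.2 : ℕ) = t) := by
  intro l
  induction l with
  | nil => exact fun _ _ => ⟨[], [], by simp⟩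
  | cons p l ih =>
    intro hbd hsort
    rw [List.map_cons, List.pairwise_cons] at hsort
    obtain ⟨hle, hs⟩ := hsort
    by_cases h : (p.2 : ℕ) < t
    · obtain ⟨l₁, l₂, heq, h1, hs1, h2⟩ := ih (fun x hx => hbd x (by simp [hx])) hs
      refine ⟨p :: l₁, l₂, by simp [heq], ?_, ?_, h2⟩
      · intro x hx
        rcases List.mem_cons.mp hx with rfl | hx
        · exact h
        · exact h1 x hx
      · rw [List.map_cons, List.pairwise_cons]
        refine ⟨?_, hs1⟩
        intro b hb
        apply hle
        rw [heq]
        simp only [List.map_append, List.mem_append]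
        exact Or.inl hb
    · have hpt : (p.2 : ℕ) = t := by
        have := hbd p (by simp)
        omega
      refine ⟨[], p :: l, by simp, by simp, by simp, ?_⟩
      intro x hx
      rcases List.mem_cons.mp hx with rfl | hx
      · exact hpt
      · have h1 : p.2 ≤ x.2 := hle x.2 (List.mem_map_of_mem (f := Prod.snd) hx)
        have h2 : (x.2 : ℕ) < t + 1 := hbd x (by simp [hx])
        have h3 : (p.2 : ℕ) ≤ (x.2 : ℕ) := h1
        omega

lemma Wk_succ (t n : ℕ) (ρ σ : Equiv.Perm (Fin d)) :
    Wk d (t + 1) n ρ σ = ∑ sr ∈ Finset.HasAntidiagonal.antidiagonal n, ∑ τ : Equiv.Perm (Fin d),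
      Vc d t sr.1 τ σ * Wk d t sr.2 ρ τ := by
  have key : Nat.card ((sr : (Finset.HasAntidiagonal.antidiagonal n : Finset (ℕ × ℕ))) × (τ : Equiv.Perm (Fin d)) ×
      ({l : List (Fin d × Fin d) // l.length = sr.1.1 ∧ PV t l ∧ τ * prodSwaps l = σ} ×
       {l : List (Fin d × Fin d) // l.length = sr.1.2 ∧ PW t l ∧ ρ * prodSwaps l = τ})) =
      Wk d (t + 1) n ρ σ := by
    apply Nat.card_eq_of_bijective (fun x => (⟨x.2.2.2.1 ++ x.2.2.1.1, by
      obtain ⟨⟨sr, hsr⟩, τ, ⟨l₂, hl₂, hPV2, hp₂⟩, ⟨l₁, hl₁, hPW1, hp₁⟩⟩ := x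
      rw [Finset.HasAntidiagonal.mem_antidiagonal] at hsr
      dsimp only at hl₁ hl₂ ⊢
      refine ⟨by simp only [List.length_append]; omega, ⟨?_, ?_⟩, ?_⟩
      · intro p hp
        rcases List.mem_append.mp hp with h | h
        · obtain ⟨h1, h2⟩ := hPW1.1 p h
          exact ⟨h1, by omega⟩
        · obtain ⟨h1, h2⟩ := hPV2 p h
          exact ⟨h1, by omega⟩
      · rw [List.map_append]
        refine List.pairwise_append.mpr ⟨hPW1.2, ?_, ?_⟩
        · apply List.pairwise_of_forall_mem_list
          intro a ha b hb
          simp only [List.mem_map] at ha hb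
          obtain ⟨pa, hpa, rfl⟩ := ha
          obtain ⟨pb, hpb, rfl⟩ := hb
          have h1 := (hPV2 pa hpa).2
          have h2 := (hPV2 pb hpb).2
          rw [Fin.le_def]
          omega
        · intro a ha b hb
          simp only [List.mem_map] at ha hb
          obtain ⟨pa, hpa, rfl⟩ := ha
          obtain ⟨pb, hpb, rfl⟩ := hb
          have h1 := (hPW1.1 pa hpa).2
          have h2 := (hPV2 pb hpb).2
          rw [Fin.le_def]
          omega
      · rw [prodSwaps_append, ← mul_assoc, hp₁, hp₂]⟩ :
      {l : List (Fin d × Fin d) // l.length = n ∧ PW (t + 1) l ∧ ρ * prodSwaps l = σ}))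
    constructor
    · rintro ⟨⟨sr, hsr⟩, τ, ⟨l₂, hl₂, hPV2, hp₂⟩, ⟨l₁, hl₁, hPW1, hp₁⟩⟩
        ⟨⟨sr', hsr'⟩, τ', ⟨m₂, hm₂, hPV2', hp₂'⟩, ⟨m₁, hm₁, hPW1', hp₁'⟩⟩ hh
      simp only [Subtype.mk.injEq] at hh
      dsimp only at hl₁ hl₂ hm₁ hm₂
      obtain ⟨e1, e2⟩ := uniq_split (C := fun x : Fin d × Fin d => (x.2 : ℕ) < t)
        (D := fun x : Fin d × Fin d => (x.2 : ℕ) = t) (fun x h1 h2 => by omega)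
        l₁ m₁ l₂ m₂ (fun x hx => (hPW1.1 x hx).2) (fun x hx => (hPW1'.1 x hx).2)
        (fun x hx => (hPV2 x hx).2) (fun x hx => (hPV2' x hx).2) hh
      subst e1
      subst e2
      have esr : sr = sr' := by
        have e1 : sr.1 = sr'.1 := by omega
        have e2 : sr.2 = sr'.2 := by omega
        exact Prod.ext e1 e2
      subst esr
      have eτ : τ = τ' := hp₁.symm.trans hp₁'
      subst eτ
      rfl
    · rintro ⟨l, hlen, ⟨hel, hsort⟩, hprod⟩
      obtain ⟨l₁, l₂, rfl, h1, hs1, h2⟩ := split_exists l (fun p hp => (hel p hp).2) hsort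
      have hlen' : l₁.length + l₂.length = n := by
        rw [← List.length_append]; exact hlen
      refine ⟨⟨⟨(l₂.length, l₁.length), by rw [Finset.HasAntidiagonal.mem_antidiagonal]; omega⟩,
        ρ * prodSwaps l₁,
        ⟨⟨l₂, rfl, fun p hp => ⟨(hel p (by simp [hp])).1, h2 p hp⟩, ?_⟩,
         ⟨l₁, rfl, ⟨fun p hp => ⟨(hel p (by simp [hp])).1, h1 p hp⟩, hs1⟩, rfl⟩⟩⟩, ?_⟩
      · rw [mul_assoc, ← prodSwaps_append]
        exact hprod
      · exact Subtype.ext rfl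
  rw [← key, nat_card_sigma]
  have step : ∀ sr : (Finset.HasAntidiagonal.antidiagonal n : Finset (ℕ × ℕ)),
      Nat.card ((τ : Equiv.Perm (Fin d)) ×
        ({l : List (Fin d × Fin d) // l.length = sr.1.1 ∧ PV t l ∧ τ * prodSwaps l = σ} ×
         {l : List (Fin d × Fin d) // l.length = sr.1.2 ∧ PW t l ∧ ρ * prodSwaps l = τ})) =
      ∑ τ : Equiv.Perm (Fin d), Vc d t sr.1.1 τ σ * Wk d t sr.1.2 ρ τ := by
    intro sr
    rw [nat_card_sigma]
    exact Finset.sum_congr rfl fun τ _ => Nat.card_prod _ _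
  rw [Finset.sum_congr rfl fun sr _ => step sr]
  exact Finset.sum_coe_sort (Finset.HasAntidiagonal.antidiagonal n)
    (fun sr => ∑ τ : Equiv.Perm (Fin d), Vc d t sr.1 τ σ * Wk d t sr.2 ρ τ)



open Equiv Equiv.Perm Finset Matrix
open scoped Classical

variable {d : ℕ}

def fC (π : Equiv.Perm (Fin d)) : ℕ := π.support.card - π.cycleType.card

lemma cycleType_card_le (π : Equiv.Perm (Fin d)) : π.cycleType.card ≤ π.support.card := by
  rw [← Equiv.Perm.sum_cycleType]
  calc π.cycleType.card = π.cycleType.card • 1 := by simp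
  _ ≤ π.cycleType.sum := Multiset.card_nsmul_le_sum fun x hx => by
      have := Equiv.Perm.two_le_of_mem_cycleType hx
      omega

lemma fC_cut {π : Equiv.Perm (Fin d)} {k : Fin d} (hk : π k ≠ k) :
    fC (Equiv.swap (π k) k * π) + 1 = fC π := by
  set c := π.cycleOf k with hc_def
  have hc : c.IsCycle := Equiv.Perm.isCycle_cycleOf π hk
  have hck : c k = π k := π.cycleOf_apply_self k
  have hckk : c k ≠ k := by rw [hck]; exact hk
  set ρ := c⁻¹ * π with hρ_def
  have hd : c.Disjoint ρ := by
    intro x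
    by_cases hx : π.SameCycle k x
    · right
      show c⁻¹ (π x) = x
      have : c x = π x := hx.cycleOf_apply
      rw [← this, Equiv.Perm.inv_def, Equiv.symm_apply_apply]
    · left
      exact Equiv.Perm.cycleOf_apply_of_not_sameCycle hx
  have hπ : π = c * ρ := by
    rw [hρ_def, ← mul_assoc, mul_inv_cancel, one_mul]
  have hkc : k ∈ c.support := Equiv.Perm.mem_support.mpr hckk
  have hcck : c (c k) = π (π k) := by
    rw [hck]
    exact Equiv.Perm.SameCycle.cycleOf_apply ⟨1, by simp⟩
  have hswap : Equiv.swap (π k) k = Equiv.swap k (c k) := by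
    rw [hck, Equiv.swap_comm]
  have hmain : Equiv.swap (π k) k * π = (Equiv.swap k (c k) * c) * ρ := by
    rw [hswap, mul_assoc, ← hπ]
  have hcρ := cycleType_card_le ρ
  by_cases hA : π (π k) = k
  · -- c is a transposition
    have hceq : c = Equiv.swap k (c k) := hc.eq_swap_of_apply_apply_eq_self hckk (by rw [hcck]; exact hA)
    have h1 : Equiv.swap k (c k) * c = 1 := by
      have : Equiv.swap k (c k) * c = Equiv.swap k (c k) * Equiv.swap k (c k) := by
        congr 1
      rw [this, Equiv.swap_mul_self]
    have hπ' : Equiv.swap (π k) k * π = ρ := by rw [hmain, h1, one_mul]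
    have hct : π.cycleType = {2} + ρ.cycleType := by
      rw [hπ, hd.cycleType_mul, hc.cycleType]
      congr 1
      rw [hceq]
      simp [Equiv.Perm.card_support_swap (Ne.symm hckk)]
    have hs : π.support.card = 2 + ρ.support.card := by
      rw [hπ, hd.support_mul, Finset.card_union_of_disjoint hd.disjoint_support]
      congr 1
      rw [hceq]
      exact Equiv.Perm.card_support_swap (Ne.symm hckk)
    rw [hπ']
    unfold fC
    rw [hct, hs]
    simp only [Multiset.card_add, Multiset.card_singleton]
    omega
  · -- cut a longer cycle
    set c' := Equiv.swap k (c k) * c with hc'_def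
    have hc' : c'.IsCycle := hc.swap_mul hckk (by rw [hcck]; exact hA)
    have hsupp' : c'.support = c.support.erase k := by
      ext x
      simp only [Equiv.Perm.mem_support, Finset.mem_erase]
      constructor
      · intro hx
        constructor
        · rintro rfl
          apply hx
          rw [hc'_def, Equiv.Perm.mul_apply, hck]
          rw [← hck]
          exact Equiv.swap_apply_right _ _
        · intro hcx
          apply hx
          rw [hc'_def, Equiv.Perm.mul_apply, hcx]
          have hx1 : x ≠ k := fun h => hckk (h ▸ hcx)
          have hx2 : x ≠ c k := fun h => hckk (c.injective (h ▸ hcx))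
          exact Equiv.swap_apply_of_ne_of_ne hx1 hx2
      · rintro ⟨hxk, hcx⟩ hx'
        rw [hc'_def, Equiv.Perm.mul_apply] at hx'
        by_cases h1 : c x = k
        · rw [h1, Equiv.swap_apply_left] at hx'
          exfalso
          apply hA
          rw [← hcck, hx']
          exact h1
        · by_cases h2 : c x = c k
          · exact hxk (c.injective h2)
          · rw [Equiv.swap_apply_of_ne_of_ne h1 h2] at hx'
            exact hcx hx'
    have hd' : c'.Disjoint ρ := by
      intro x
      rcases hd x with h | h
      · left
        rw [hc'_def, Equiv.Perm.mul_apply, h]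
        have h1 : x ≠ k := by rintro rfl; exact Equiv.Perm.mem_support.mp hkc h
        have h2 : x ≠ c k := by
          rintro rfl
          exact hckk (c.injective h)
        exact Equiv.swap_apply_of_ne_of_ne h1 h2
      · right; exact h
    have hsc2 : 2 ≤ c.support.card := hc.two_le_card_support
    have hct : π.cycleType = {c.support.card} + ρ.cycleType := by
      rw [hπ, hd.cycleType_mul, hc.cycleType]
    have hct' : (Equiv.swap (π k) k * π).cycleType = {c.support.card - 1} + ρ.cycleType := by
      rw [hmain, hd'.cycleType_mul, hc'.cycleType, hsupp',
        Finset.card_erase_of_mem hkc]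
    have hs : π.support.card = c.support.card + ρ.support.card := by
      rw [hπ, hd.support_mul, Finset.card_union_of_disjoint hd.disjoint_support]
    have hs' : (Equiv.swap (π k) k * π).support.card = (c.support.card - 1) + ρ.support.card := by
      rw [hmain, hd'.support_mul, Finset.card_union_of_disjoint hd'.disjoint_support,
        hsupp', Finset.card_erase_of_mem hkc]
    unfold fC
    rw [hct, hct', hs, hs']
    simp only [Multiset.card_add, Multiset.card_singleton]
    omega



open Equiv Equiv.Perm Finset Matrix
open scoped Classical

variable {d : ℕ}

@[simp] lemma toSwap_inv (p : Fin d × Fin d) : (toSwap p)⁻¹ = toSwap p := by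
  simp [toSwap]

def gf (q : ℂ) (t : ℕ) (π : Equiv.Perm (Fin d)) : ℂ :=
  if ∀ x : Fin d, π x ≠ x → (x : ℕ) < t then q ^ fC π else 0

def Amat (d : ℕ) (q : ℂ) (t : ℕ) : Mat d :=
  Matrix.of fun σ ρ => ∑ p ∈ Pt d t, if ρ * toSwap p = σ then (1 : ℂ) else 0

def Emat (d : ℕ) (q : ℂ) : ℕ → Mat d
  | 0 => 1
  | (t + 1) => Emat d q t * (1 + q • Amat d q t)

lemma mem_Pt_iff {p : Fin d × Fin d} {t : ℕ} : p ∈ Pt d t ↔ p.1 < p.2 ∧ (p.2 : ℕ) = t := by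
  simp [Pt]

lemma gf_rec (q : ℂ) {t : ℕ} (htd : t < d) (π : Equiv.Perm (Fin d)) :
    gf q (t + 1) π = gf q t π + q * ∑ p ∈ Pt d t, gf q t (toSwap p * π) := by
  set k : Fin d := ⟨t, htd⟩ with hk_def
  have hkval : (k : ℕ) = t := rfl
  by_cases hb : ∀ x : Fin d, π x ≠ x → (x : ℕ) < t + 1
  · by_cases hπk : π k = k
    · -- π already supported below t
      have hbt : ∀ x : Fin d, π x ≠ x → (x : ℕ) < t := by
        intro x hx
        have h1 := hb x hx
        have h2 : x ≠ k := fun h => hx (by rw [h, hπk])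
        have h3 : (x : ℕ) ≠ t := fun h => h2 (Fin.ext h)
        omega
      have hterm : ∀ p ∈ Pt d t, gf q t (toSwap p * π) = 0 := by
        intro p hp
        rw [mem_Pt_iff] at hp
        have hp2 : p.2 = k := Fin.ext hp.2
        have hmoves : (toSwap p * π) k ≠ k := by
          rw [Equiv.Perm.mul_apply, hπk, toSwap, hp2, Equiv.swap_apply_right]
          intro h
          exact absurd hp.1 (by rw [h, hp2]; exact lt_irrefl k)
        rw [gf, if_neg]
        intro hall
        exact absurd (hall k hmoves) (by omega)
      rw [Finset.sum_congr rfl hterm]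
      simp only [Finset.sum_const_zero, mul_zero, add_zero]
      rw [gf, gf, if_pos hb, if_pos hbt]
    · -- k is the top point of the support
      have hπk_lt : (π k : ℕ) < t := by
        have h1 : π (π k) ≠ π k := fun h => hπk (π.injective h)
        have h2 := hb (π k) h1
        have h3 : (π k : ℕ) ≠ t := fun h => hπk (Fin.ext h)
        omega
      set p₀ : Fin d × Fin d := (π k, k) with hp₀_def
      have hp₀ : p₀ ∈ Pt d t := by
        rw [mem_Pt_iff]
        exact ⟨by rw [Fin.lt_def]; exact hπk_lt, rfl⟩
      have hsum : ∑ p ∈ Pt d t, gf q t (toSwap p * π) = gf q t (toSwap p₀ * π) := by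
        apply Finset.sum_eq_single p₀
        · intro p hp hne
          rw [mem_Pt_iff] at hp
          have hp2 : p.2 = k := Fin.ext hp.2
          have hp1 : p.1 ≠ π k := by
            intro h
            apply hne
            rw [hp₀_def, ← h, ← hp2]
          have hmoves : (toSwap p * π) k ≠ k := by
            rw [Equiv.Perm.mul_apply, toSwap, hp2]
            rw [Equiv.swap_apply_of_ne_of_ne (Ne.symm hp1) hπk]
            exact hπk
          rw [gf, if_neg]
          intro hall
          exact absurd (hall k hmoves) (by omega)
        · intro h
          exact absurd hp₀ h
      rw [hsum]
      set π' := toSwap p₀ * π with hπ'_def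
      have hπ'' : π' = Equiv.swap (π k) k * π := rfl
      have hfix : π' k = k := by
        rw [hπ'', Equiv.Perm.mul_apply, Equiv.swap_apply_left]
      have hbt' : ∀ x : Fin d, π' x ≠ x → (x : ℕ) < t := by
        intro x hx
        have hxk : x ≠ k := fun h => hx (by rw [h, hfix])
        have hπx : π x ≠ x := by
          intro h
          apply hx
          rw [hπ'', Equiv.Perm.mul_apply, h]
          have h1 : x ≠ π k := by
            intro h1
            rw [h1] at h
            exact hπk (π.injective h)
          exact Equiv.swap_apply_of_ne_of_ne (fun hh => h1 hh) hxk
        have := hb x hπx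
        have : (x : ℕ) ≠ t := fun h => hxk (Fin.ext h)
        omega
      have hcut : fC π' + 1 = fC π := fC_cut hπk
      rw [gf, gf, gf, if_pos hb, if_neg (fun hall => absurd (hall k hπk) (by omega)),
        if_pos hbt']
      rw [← hcut, pow_succ]
      ring
  · have hb' : ¬∀ x : Fin d, π x ≠ x → (x : ℕ) < t := by
      intro hall
      exact hb fun x hx => by have := hall x hx; omega
    have hterm : ∀ p ∈ Pt d t, gf q t (toSwap p * π) = 0 := by
      intro p hp
      rw [mem_Pt_iff] at hp
      rw [gf, if_neg]
      intro hall
      apply hb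
      intro x hx
      by_cases h : (toSwap p * π) x = x
      · have hkey : π x = Equiv.swap p.1 p.2 x := by
          have h2 := congrArg (toSwap p) h
          rwa [← Equiv.Perm.mul_apply, ← mul_assoc, toSwap, Equiv.swap_mul_self, one_mul] at h2
        have hxp : x = p.1 ∨ x = p.2 := by
          by_contra hcon
          push_neg at hcon
          rw [Equiv.swap_apply_of_ne_of_ne hcon.1 hcon.2] at hkey
          exact hx hkey
        have h1 : (p.1 : ℕ) < (p.2 : ℕ) := hp.1
        rcases hxp with rfl | rfl
        · omega
        · omega
      · have := hall x h
        omega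
    rw [Finset.sum_congr rfl hterm]
    simp only [Finset.sum_const_zero, mul_zero, add_zero]
    rw [gf, gf, if_neg hb, if_neg hb']

lemma mul_one_add_A_apply (q : ℂ) (t : ℕ) (M : Mat d) (σ ρ : Equiv.Perm (Fin d)) :
    (M * (1 + q • Amat d q t)) σ ρ = M σ ρ + q * ∑ p ∈ Pt d t, M σ (ρ * toSwap p) := by
  rw [mul_add, mul_one, Matrix.add_apply, mul_smul_comm, Matrix.smul_apply, smul_eq_mul]
  congr 1
  rw [Matrix.mul_apply]
  have h1 : ∀ τ : Equiv.Perm (Fin d), M σ τ * Amat d q t τ ρ =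
      ∑ p ∈ Pt d t, if ρ * toSwap p = τ then M σ τ else 0 := by
    intro τ
    rw [Amat, Matrix.of_apply, Finset.mul_sum]
    apply Finset.sum_congr rfl
    intro p _
    rw [mul_ite, mul_one, mul_zero]
  rw [Finset.sum_congr rfl fun τ _ => h1 τ]
  rw [Finset.sum_comm]
  congr 1
  apply Finset.sum_congr rfl
  intro p _
  rw [Finset.sum_ite_eq Finset.univ (ρ * toSwap p) (fun τ => M σ τ)]
  simp

lemma Emat_apply (q : ℂ) : ∀ t, t ≤ d → ∀ σ ρ : Equiv.Perm (Fin d),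
    Emat d q t σ ρ = gf q t (ρ⁻¹ * σ) := by
  intro t
  induction t with
  | zero =>
    intro _ σ ρ
    rw [Emat, Matrix.one_apply, gf]
    by_cases h : σ = ρ
    · subst h
      rw [if_pos rfl, if_pos]
      · have h1 : fC (σ⁻¹ * σ) = 0 := by
          rw [inv_mul_cancel]
          simp [fC]
        rw [h1, pow_zero]
      · intro x hx
        rw [inv_mul_cancel] at hx
        simp at hx
    · rw [if_neg h, if_neg]
      intro hall
      apply h
      have h2 : ρ⁻¹ * σ = 1 := by
        apply Equiv.ext
        intro x
        rw [Equiv.Perm.one_apply]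
        by_contra hcon
        exact absurd (hall x hcon) (by omega)
      have h3 := congrArg (fun τ => ρ * τ) h2
      simpa using h3
  | succ t ih =>
    intro ht σ ρ
    have htd : t < d := ht
    have hsum : ∀ p ∈ Pt d t,
        Emat d q t σ (ρ * toSwap p) = gf q t (toSwap p * (ρ⁻¹ * σ)) := by
      intro p _
      rw [ih (le_of_lt htd)]
      exact congrArg (gf q t) (by rw [_root_.mul_inv_rev, toSwap_inv, mul_assoc])
    rw [Emat, mul_one_add_A_apply, Finset.sum_congr rfl hsum, ih (le_of_lt htd),
      gf_rec q htd]

lemma d_sub_ell (π : Equiv.Perm (Fin d)) : d - ell π = fC π := by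
  have h1 : π.support.card ≤ d := by
    have := Finset.card_le_univ π.support
    simpa using this
  have h2 := cycleType_card_le π
  rw [ell, fC]
  omega

lemma Omega_eq_Emat (q : ℂ) : Omega d q = Emat d q d := by
  ext σ ρ
  rw [Omega, Matrix.of_apply, Emat_apply q d le_rfl, gf, if_pos (fun x _ => x.isLt), d_sub_ell]



open Equiv Equiv.Perm Finset Matrix
open scoped Classical

variable {d : ℕ}

attribute [local instance] Matrix.linftyOpNormedRing Matrix.linftyOpNormedAlgebra

instance matCompleteSpace : CompleteSpace (Mat d) := FiniteDimensional.complete ℂ _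

def Pm (p : Fin d × Fin d) : Mat d := Matrix.of fun σ ρ => if ρ * toSwap p = σ then (1 : ℂ) else 0

lemma norm_Pm_le (p : Fin d × Fin d) : ‖Pm p‖ ≤ 1 := by
  have h : ‖Pm p‖₊ ≤ 1 := by
    rw [Matrix.linfty_opNNNorm_def]
    apply Finset.sup_le
    intro σ _
    have hrow : ∀ ρ : Equiv.Perm (Fin d), ‖Pm p σ ρ‖₊ =
        if ρ = σ * toSwap p then (1 : NNReal) else 0 := by
      intro ρ
      rw [Pm, Matrix.of_apply]
      have hiff : (ρ * toSwap p = σ) ↔ (ρ = σ * toSwap p) := by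
        constructor
        · intro h; rw [← h, mul_assoc]; simp [toSwap]
        · intro h; rw [h, mul_assoc]; simp [toSwap]
      by_cases hcase : ρ * toSwap p = σ
      · rw [if_pos hcase, if_pos (hiff.mp hcase)]; simp
      · rw [if_neg hcase, if_neg (fun hh => hcase (hiff.mpr hh))]; simp
    rw [Finset.sum_congr rfl fun ρ _ => hrow ρ]
    rw [Finset.sum_ite_eq' Finset.univ (σ * toSwap p) (fun _ => (1 : NNReal))]
    simp
  calc ‖Pm p‖ = ((‖Pm p‖₊ : NNReal) : ℝ) := (coe_nnnorm _).symm
  _ ≤ ((1 : NNReal) : ℝ) := NNReal.coe_le_coe.mpr h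
  _ = 1 := by simp

lemma Amat_eq_sum_Pm (q : ℂ) (t : ℕ) : Amat d q t = ∑ p ∈ Pt d t, Pm p := by
  ext σ ρ
  rw [Amat, Matrix.of_apply, Matrix.sum_apply]
  rfl

lemma norm_Amat_le (q : ℂ) (t : ℕ) : ‖Amat d q t‖ ≤ ((Pt d t).card : ℝ) := by
  rw [Amat_eq_sum_Pm]
  calc ‖∑ p ∈ Pt d t, Pm p‖ ≤ ∑ p ∈ Pt d t, ‖Pm p‖ := norm_sum_le _ _
  _ ≤ ∑ p ∈ Pt d t, 1 := Finset.sum_le_sum fun p _ => norm_Pm_le p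
  _ = ((Pt d t).card : ℝ) := by simp

lemma norm_x_lt {q : ℂ} (hd : 1 ≤ d) (hq : 2 ≤ d → ‖q‖ < 1 / ((d : ℝ) - 1))
    {t : ℕ} (htd : t < d) : ‖-(q • Amat d q t)‖ < 1 := by
  rw [norm_neg, norm_smul]
  rcases Nat.lt_or_ge d 2 with hd2 | hd2
  · -- d = 1, t = 0
    have hd1 : d = 1 := by omega
    have ht0 : t = 0 := by omega
    have hcard : (Pt d t).card = 0 := by
      have := card_Pt_le (d := d) t
      omega
    have hA : ‖Amat d q t‖ ≤ 0 := by
      have := norm_Amat_le (d := d) q t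
      rw [hcard] at this
      simpa using this
    have : ‖Amat d q t‖ = 0 := le_antisymm hA (norm_nonneg _)
    rw [this, mul_zero]
    norm_num
  · have hq' := hq hd2
    have hAle : ‖Amat d q t‖ ≤ ((d : ℝ) - 1) := by
      calc ‖Amat d q t‖ ≤ ((Pt d t).card : ℝ) := norm_Amat_le q t
      _ ≤ (t : ℝ) := by exact_mod_cast Nat.cast_le.mpr (card_Pt_le t)
      _ ≤ ((d : ℝ) - 1) := by
          have : (t : ℝ) ≤ (d : ℝ) - 1 := by
            have : t ≤ d - 1 := by omega
            have hcast : ((d - 1 : ℕ) : ℝ) = (d : ℝ) - 1 := by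
              have : 1 ≤ d := by omega
              push_cast [this]
              ring
            rw [← hcast]
            exact_mod_cast this
          exact this
    have hdpos : (0 : ℝ) < (d : ℝ) - 1 := by
      have : (2 : ℝ) ≤ (d : ℝ) := by exact_mod_cast hd2
      linarith
    have h1 : ‖q‖ * ‖Amat d q t‖ ≤ ‖q‖ * ((d : ℝ) - 1) :=
      mul_le_mul_of_nonneg_left hAle (norm_nonneg q)
    have h2 : ‖q‖ * ((d : ℝ) - 1) < 1 := by
      have : ‖q‖ < 1 / ((d : ℝ) - 1) := hq'
      calc ‖q‖ * ((d : ℝ) - 1) < (1 / ((d : ℝ) - 1)) * ((d : ℝ) - 1) :=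
        mul_lt_mul_of_pos_right this hdpos
      _ = 1 := by field_simp
    linarith

def Hmat (d : ℕ) (t r : ℕ) : Mat d := Matrix.of fun σ ρ => ((Wk d t r ρ σ : ℕ) : ℂ)

lemma Hmat_zero (r : ℕ) : Hmat d 0 r = if r = 0 then (1 : Mat d) else 0 := by
  ext σ ρ
  rw [Hmat, Matrix.of_apply, Wk_zero]
  by_cases hr : r = 0
  · subst hr
    rw [if_pos rfl, Matrix.one_apply]
    by_cases h : ρ = σ
    · rw [if_pos ⟨rfl, h⟩, if_pos h.symm]; simp
    · rw [if_neg (fun hh => h hh.2), if_neg (fun hh => h hh.symm)]; simp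
  · rw [if_neg hr, if_neg (fun hh => hr hh.1)]
    simp

lemma Apow_apply (q : ℂ) (t s : ℕ) (σ τ : Equiv.Perm (Fin d)) :
    ((Amat d q t) ^ s) σ τ = ((Vc d t s τ σ : ℕ) : ℂ) := by
  induction s generalizing σ τ with
  | zero =>
    rw [pow_zero, Matrix.one_apply, Vc_zero]
    by_cases h : τ = σ
    · rw [if_pos h, if_pos h.symm]; simp
    · rw [if_neg (fun hh => h hh.symm), if_neg h]; simp
  | succ s ih =>
    rw [pow_succ, Matrix.mul_apply, Vc_succ]
    have h1 : ∀ μ : Equiv.Perm (Fin d), ((Amat d q t) ^ s) σ μ * (Amat d q t) μ τ =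
        ∑ p ∈ Pt d t, if τ * toSwap p = μ then ((Vc d t s (τ * toSwap p) σ : ℕ) : ℂ) else 0 := by
      intro μ
      rw [ih, Amat, Matrix.of_apply, Finset.mul_sum]
      apply Finset.sum_congr rfl
      intro p _
      rw [mul_ite, mul_one, mul_zero]
      by_cases h : τ * toSwap p = μ
      · rw [if_pos h, if_pos h, h]
      · rw [if_neg h, if_neg h]
    rw [Finset.sum_congr rfl fun μ _ => h1 μ, Finset.sum_comm]
    rw [Nat.cast_sum]
    apply Finset.sum_congr rfl
    intro p _
    rw [Finset.sum_ite_eq Finset.univ (τ * toSwap p)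
      (fun _ => ((Vc d t s (τ * toSwap p) σ : ℕ) : ℂ))]
    simp

lemma Hmat_rec (q : ℂ) (t n : ℕ) :
    Hmat d (t + 1) n = ∑ sr ∈ Finset.HasAntidiagonal.antidiagonal n, (Amat d q t) ^ sr.1 * Hmat d t sr.2 := by
  ext σ ρ
  rw [Hmat, Matrix.of_apply, Wk_succ, Matrix.sum_apply, Nat.cast_sum]
  apply Finset.sum_congr rfl
  intro sr _
  rw [Matrix.mul_apply, Nat.cast_sum]
  apply Finset.sum_congr rfl
  intro τ _
  rw [Apow_apply, Hmat, Nat.cast_mul]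
  rfl

def Smat (d : ℕ) (q : ℂ) : ℕ → Mat d
  | 0 => 1
  | (t + 1) => (∑' s : ℕ, (-(q • Amat d q t)) ^ s) * Smat d q t

lemma main_induction {q : ℂ} (hd : 1 ≤ d) (hq : 2 ≤ d → ‖q‖ < 1 / ((d : ℝ) - 1)) :
    ∀ t, t ≤ d → (Summable fun r : ℕ => ‖(-q) ^ r • Hmat d t r‖) ∧
      Smat d q t = ∑' r : ℕ, (-q) ^ r • Hmat d t r := by
  intro t
  induction t with
  | zero =>
    intro _
    have hfun : ∀ r : ℕ, (-q) ^ r • Hmat d 0 r = if r = 0 then (1 : Mat d) else 0 := by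
      intro r
      rw [Hmat_zero]
      by_cases hr : r = 0
      · subst hr; simp
      · rw [if_neg hr, smul_zero]
    constructor
    · apply summable_of_ne_finset_zero (s := {0})
      intro r hr
      rw [hfun r, if_neg (by simpa using hr)]
      simp
    · rw [Smat]
      rw [tsum_eq_single 0 (fun r hr => by rw [hfun r, if_neg hr])]
      rw [hfun 0, if_pos rfl]
  | succ t ih =>
    intro ht
    have htd : t < d := ht
    obtain ⟨ihs, ihe⟩ := ih (le_of_lt htd)
    set x : Mat d := -(q • Amat d q t) with hx_def
    have hx : ‖x‖ < 1 := norm_x_lt hd hq htd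
    have hf : Summable fun s : ℕ => ‖x ^ s‖ := by
      apply Summable.of_nonneg_of_le (fun s => norm_nonneg _) (fun s => norm_pow_le x s)
      exact summable_geometric_of_lt_one (norm_nonneg x) hx
    have hterm : ∀ n : ℕ, ∑ kl ∈ Finset.HasAntidiagonal.antidiagonal n, x ^ kl.1 * ((-q) ^ kl.2 • Hmat d t kl.2)
        = (-q) ^ n • Hmat d (t + 1) n := by
      intro n
      have hxq : x = (-q) • Amat d q t := by rw [hx_def, neg_smul]
      have h1 : ∀ kl ∈ Finset.HasAntidiagonal.antidiagonal n,
          x ^ kl.1 * ((-q) ^ kl.2 • Hmat d t kl.2) =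
          (-q) ^ n • ((Amat d q t) ^ kl.1 * Hmat d t kl.2) := by
        intro kl hkl
        rw [Finset.HasAntidiagonal.mem_antidiagonal] at hkl
        rw [hxq, smul_pow, smul_mul_assoc, mul_smul_comm, smul_smul, ← pow_add, hkl]
      rw [Finset.sum_congr rfl h1, ← Finset.smul_sum, ← Hmat_rec q t n]
    constructor
    · have hs := summable_norm_sum_mul_antidiagonal_of_summable_norm hf ihs
      convert hs using 2 with n
      rw [hterm n]
    · rw [Smat, ihe, ← hx_def]
      exact (tsum_mul_tsum_eq_tsum_sum_antidiagonal_of_summable_norm hf ihs).trans (tsum_congr fun n => (hterm n))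



open Equiv Equiv.Perm Finset Matrix
open scoped Classical

variable {d : ℕ}

attribute [local instance] Matrix.linftyOpNormedRing Matrix.linftyOpNormedAlgebra

lemma entry_norm_le (M : Mat d) (σ ρ : Equiv.Perm (Fin d)) : ‖M σ ρ‖ ≤ ‖M‖ := by
  have h : ‖M σ ρ‖₊ ≤ ‖M‖₊ := by
    rw [Matrix.linfty_opNNNorm_def]
    calc ‖M σ ρ‖₊ ≤ ∑ j, ‖M σ j‖₊ :=
      Finset.single_le_sum (f := fun j => ‖M σ j‖₊) (fun j _ => zero_le) (Finset.mem_univ ρ)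
    _ ≤ _ := Finset.le_sup (f := fun i => ∑ j, ‖M i j‖₊) (Finset.mem_univ σ)
  exact_mod_cast h

def evalCLM (σ ρ : Equiv.Perm (Fin d)) : Mat d →L[ℂ] ℂ :=
  LinearMap.mkContinuous
    { toFun := fun M => M σ ρ
      map_add' := fun _ _ => rfl
      map_smul' := fun _ _ => rfl } 1 (fun M => by rw [one_mul]; exact entry_norm_le M σ ρ)

lemma EmatSmat {q : ℂ} (hd : 1 ≤ d) (hq : 2 ≤ d → ‖q‖ < 1 / ((d : ℝ) - 1)) :
    ∀ t, t ≤ d → Emat d q t * Smat d q t = 1 := by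
  intro t
  induction t with
  | zero => intro _; rw [Emat, Smat, one_mul]
  | succ t ih =>
    intro ht
    have htd : t < d := ht
    have hx : ‖-(q • Amat d q t)‖ < 1 := norm_x_lt hd hq htd
    have hgeom : (1 + q • Amat d q t) * (∑' s : ℕ, (-(q • Amat d q t)) ^ s) = 1 := by
      have h1 : (1 : Mat d) + q • Amat d q t = 1 - -(q • Amat d q t) := by
        rw [sub_neg_eq_add]
      rw [h1]
      exact mul_neg_geom_series _ hx
    rw [Emat, Smat, mul_assoc, ← mul_assoc (1 + q • Amat d q t), hgeom, one_mul]
    exact ih (le_of_lt htd)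

lemma Wk_top (r : ℕ) (ρ σ : Equiv.Perm (Fin d)) : Wk d d r ρ σ = Wle d r ρ σ := by
  unfold Wk Wle
  apply Nat.card_congr
  apply Equiv.subtypeEquivRight
  intro l
  constructor
  · rintro ⟨h1, ⟨h2, h3⟩, h4⟩
    exact ⟨h1, fun p hp => (h2 p hp).1, h3, h4⟩
  · rintro ⟨h1, h2, h3, h4⟩
    exact ⟨h1, ⟨fun p hp => ⟨h2 p hp, p.2.isLt⟩, h3⟩, h4⟩

theorem main (d : ℕ) (hd : 1 ≤ d) (q : ℂ)
    (hq : 2 ≤ d → ‖q‖ < 1 / ((d : ℝ) - 1)) :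
    IsUnit (Omega d q) ∧
    ∀ ρ σ : Equiv.Perm (Fin d),
      Summable (fun r : ℕ => ‖(-q) ^ r * (Wle d r ρ σ : ℂ)‖) ∧
      (Omega d q)⁻¹ σ ρ = ∑' r : ℕ, (-q) ^ r * (Wle d r ρ σ : ℂ) := by
  have hOS : Omega d q * Smat d q d = 1 := by
    rw [Omega_eq_Emat]
    exact EmatSmat hd hq d le_rfl
  have hUnit : IsUnit (Omega d q) := (Matrix.isUnit_iff_isUnit_det _).2 (Matrix.isUnit_det_of_right_inverse hOS)
  have hInv : (Omega d q)⁻¹ = Smat d q d := Matrix.inv_eq_right_inv hOS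
  obtain ⟨hsum, heq⟩ := main_induction hd hq d le_rfl
  have hSummableM : Summable (fun r : ℕ => (-q) ^ r • Hmat d d r) := hsum.of_norm
  refine ⟨hUnit, fun ρ σ => ?_⟩
  have hentry : ∀ r : ℕ, ((-q) ^ r • Hmat d d r) σ ρ = (-q) ^ r * (Wle d r ρ σ : ℂ) := by
    intro r
    rw [Matrix.smul_apply, Hmat, Matrix.of_apply, Wk_top, smul_eq_mul]
  constructor
  · apply Summable.of_nonneg_of_le (fun r => norm_nonneg _) (fun r => ?_) hsum
    rw [← hentry r]
    exact entry_norm_le _ σ ρ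
  · rw [hInv, heq]
    have h2 : (evalCLM σ ρ) (∑' r : ℕ, (-q) ^ r • Hmat d d r) =
        ∑' r : ℕ, (evalCLM σ ρ) ((-q) ^ r • Hmat d d r) :=
      (evalCLM σ ρ).map_tsum hSummableM
    have h3 : (∑' r : ℕ, (-q) ^ r • Hmat d d r) σ ρ =
        ∑' r : ℕ, ((-q) ^ r • Hmat d d r) σ ρ := h2
    rw [h3]
    exact tsum_congr fun r => hentry r


end OmegaProof

/-- For `|q| < 1/(d-1)` (no condition when `d = 1`), the exponential distance
matrix `Ω_q` is invertible and each entry of its inverse is the absolutely convergent series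
`(Ω_q⁻¹)_{σρ} = ∑_{r≥0} (-q)^r W^r_≤(ρ,σ)` counting weakly monotone walks. -/
theorem Omega_inv_entries (d : ℕ) (hd : 1 ≤ d) (q : ℂ)
    (hq : 2 ≤ d → ‖q‖ < 1 / ((d : ℝ) - 1)) :
    IsUnit (Omega d q) ∧
    ∀ ρ σ : Equiv.Perm (Fin d),
      Summable (fun r : ℕ => ‖(-q) ^ r * (Wle d r ρ σ : ℂ)‖) ∧
      (Omega d q)⁻¹ σ ρ = ∑' r : ℕ, (-q) ^ r * (Wle d r ρ σ : ℂ) :=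
  OmegaProof.main d hd q hq
end
end
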